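/- arXiv:1901.05628 — 3 statements merged into one kernel-verified Lean document; each statement's English description precedes it below -/
import Mathlib

section
/- Let $K \subset [0,1]^N$ be a closed subset and $0 \le n \le N$ an integer. For $A \subset \{1,\dots,N\}$ let $\pi_A : [0,1]^N \to [0,1]^A$ be the coordinate projection. Then $\nu_N\left(\bigcup_{|A|\ge n} \pi_A^{-1}(\pi_A K)\right) \le 4^N \mathcal{H}^n_\infty(K, \|\cdot\|)$, where the union is over all subsets $A$ of $\{1,\dots,N\}$ of cardinality at least $n$. -/
open MeasureTheory EMetric
open scoped ENNReal

noncomputable def hausdorffContentInf {X : Type*} [PseudoEMetricSpace X]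
    (s : ℕ) (K : Set X) : ℝ≥0∞ :=
  ⨅ (E : ℕ → Set X) (_ : K = ⋃ i, E i), ∑' i, (EMetric.diam (E i)) ^ s

def cylinderOver (N : ℕ) (K : Set (Fin N → ℝ)) (A : Finset (Fin N)) : Set (Fin N → ℝ) :=
  { x | x ∈ Set.univ.pi (fun _ => Set.Icc (0 : ℝ) 1) ∧ ∃ k ∈ K, ∀ i ∈ A, x i = k i }

lemma cyl_vol (N n : ℕ) (S : Set (Fin N → ℝ))
    (hS : EMetric.diam S ≠ ⊤) (A : Finset (Fin N)) (hA : n ≤ A.card) :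
    volume (cylinderOver N S A) ≤ 2 ^ n * EMetric.diam S ^ n := by
  rcases S.eq_empty_or_nonempty with rfl | ⟨k₀, hk₀⟩
  · have h : cylinderOver N ∅ A = ∅ := by ext x; simp [cylinderOver]
    simp [h]
  · set d := (EMetric.diam S).toReal with hd
    set m : ℝ≥0∞ := min 1 (ENNReal.ofReal (2 * d)) with hm
    have hsub : cylinderOver N S A ⊆
        Set.univ.pi (fun j => Set.Icc (0:ℝ) 1 ∩
          (if j ∈ A then Set.Icc (k₀ j - d) (k₀ j + d) else Set.univ)) := by
      rintro x ⟨hx, k, hk, hxk⟩ j -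
      refine ⟨hx j (Set.mem_univ j), ?_⟩
      by_cases hj : j ∈ A
      · simp only [hj, if_true]
        have h1 : dist (k j) (k₀ j) ≤ d := by
          calc dist (k j) (k₀ j) ≤ dist k k₀ := dist_le_pi_dist k k₀ j
          _ ≤ d := by
            rw [hd, dist_edist]
            exact ENNReal.toReal_mono hS (edist_le_diam_of_mem hk hk₀)
        rw [Real.dist_eq, abs_le] at h1
        rw [hxk j hj]
        constructor <;> linarith [h1.1, h1.2]
      · simp [hj]
    have hvol : volume (cylinderOver N S A) ≤ m ^ A.card := by
      refine (measure_mono hsub).trans ?_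
      rw [volume_pi_pi]
      calc (∏ j, volume (Set.Icc (0:ℝ) 1 ∩
            (if j ∈ A then Set.Icc (k₀ j - d) (k₀ j + d) else Set.univ)))
          ≤ ∏ j, (if j ∈ A then m else 1) := by
            refine Finset.prod_le_prod' fun j _ => ?_
            by_cases hj : j ∈ A
            · simp only [hj, if_true]
              refine le_min ?_ ?_
              · refine (measure_mono Set.inter_subset_left).trans_eq ?_
                simp [Real.volume_Icc]
              · refine (measure_mono Set.inter_subset_right).trans_eq ?_
                rw [Real.volume_Icc]
                ring_nf
            · simp [hj, Real.volume_Icc]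
        _ = m ^ A.card := by
            rw [Finset.prod_ite_mem, Finset.univ_inter, Finset.prod_const]
    calc volume (cylinderOver N S A) ≤ m ^ A.card := hvol
      _ ≤ m ^ n := pow_le_pow_right_of_le_one' (min_le_left _ _) hA
      _ ≤ (ENNReal.ofReal (2 * d)) ^ n := by
          exact pow_le_pow_left' (min_le_right _ _) n
      _ = 2 ^ n * EMetric.diam S ^ n := by
          rw [ENNReal.ofReal_mul (by norm_num), ENNReal.ofReal_ofNat,
            ENNReal.ofReal_toReal hS, mul_pow]

/-- For a closed subset `K ⊆ [0,1]^N` and `0 ≤ n ≤ N`,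
`ν_N (⋃_{|A| ≥ n} π_A⁻¹(π_A K)) ≤ 4^N · 𝓗^n_∞(K, ‖·‖∞)`. -/
theorem stmt2 (N n : ℕ) (hn : n ≤ N) (K : Set (Fin N → ℝ)) (hKc : IsClosed K)
    (hK : K ⊆ Set.univ.pi fun _ => Set.Icc (0 : ℝ) 1) :
    volume (⋃ (A : Finset (Fin N)) (_ : n ≤ A.card), cylinderOver N K A)
      ≤ 4 ^ N * hausdorffContentInf n K := by
  rw [hausdorffContentInf, ENNReal.mul_iInf_of_ne (by positivity) (by simp)]
  refine le_iInf fun E => ?_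
  rw [ENNReal.mul_iInf_of_ne (by positivity) (by simp)]
  refine le_iInf fun hcov => ?_
  -- each E i is bounded
  have hEd : ∀ i, EMetric.diam (E i) ≠ ⊤ := by
    intro i
    have hsub : E i ⊆ Set.univ.pi fun _ => Set.Icc (0 : ℝ) 1 :=
      (Set.subset_iUnion E i).trans (hcov ▸ hK)
    have hb : Bornology.IsBounded (Set.univ.pi fun _ : Fin N => Set.Icc (0 : ℝ) 1) :=
      (isCompact_univ_pi fun _ => isCompact_Icc).isBounded
    exact (hb.subset hsub).ediam_ne_top
  have key : ∀ A : Finset (Fin N),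
      volume (⋃ (_ : n ≤ A.card), cylinderOver N K A)
        ≤ 2 ^ N * ∑' i, EMetric.diam (E i) ^ n := by
    intro A
    by_cases hA : n ≤ A.card
    · simp only [hA, Set.iUnion_true]
      have hsub : cylinderOver N K A ⊆ ⋃ i, cylinderOver N (E i) A := by
        rintro x ⟨hx, k, hk, hxk⟩
        rw [hcov] at hk
        obtain ⟨i, hi⟩ := Set.mem_iUnion.1 hk
        exact Set.mem_iUnion.2 ⟨i, hx, k, hi, hxk⟩
      calc volume (cylinderOver N K A) ≤ volume (⋃ i, cylinderOver N (E i) A) :=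
            measure_mono hsub
        _ ≤ ∑' i, volume (cylinderOver N (E i) A) := measure_iUnion_le _
        _ ≤ ∑' i, 2 ^ N * EMetric.diam (E i) ^ n := by
            refine ENNReal.tsum_le_tsum fun i => ?_
            refine (cyl_vol N n (E i) (hEd i) A hA).trans ?_
            exact mul_le_mul_left (pow_le_pow_right' one_le_two hn) _
        _ = 2 ^ N * ∑' i, EMetric.diam (E i) ^ n := ENNReal.tsum_mul_left
    · simp [hA]
  calc volume (⋃ (A : Finset (Fin N)) (_ : n ≤ A.card), cylinderOver N K A)
      ≤ ∑' A : Finset (Fin N), volume (⋃ (_ : n ≤ A.card), cylinderOver N K A) :=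
        measure_iUnion_le _
    _ ≤ ∑' _ : Finset (Fin N), 2 ^ N * ∑' i, EMetric.diam (E i) ^ n :=
        ENNReal.tsum_le_tsum key
    _ = (Fintype.card (Finset (Fin N))) • (2 ^ N * ∑' i, EMetric.diam (E i) ^ n) := by
        rw [tsum_fintype, Finset.sum_const, Finset.card_univ]
    _ = 4 ^ N * ∑' i, EMetric.diam (E i) ^ n := by
        rw [Fintype.card_finset, Fintype.card_fin, nsmul_eq_mul, ← mul_assoc]
        push_cast
        rw [← mul_pow]
        norm_num
end

section
/- Let $(\mathcal{X},\mathbf{d})$ be a compact metric space. Then there exists a metric $\mathbf{d}'$ on $\mathcal{X}$, compatible with the topology, such that $\mathbf{d}'(x,y) \le \mathbf{d}(x,y)$ for all $x,y$, and $(\mathcal{X},\mathbf{d}')$ has the tame growth of covering numbers: for every $\delta>0$, $\lim_{\varepsilon\to 0} \varepsilon^\delta \log \#(\mathcal{X},\mathbf{d}',\varepsilon) = 0$. -/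
open Filter Set Topology

/-- Diameter of a set with respect to an abstract distance function `d`. -/
noncomputable def sdiam {X : Type*} (d : X → X → ℝ) (E : Set X) : ℝ :=
  sSup (Set.image2 d E E)

/-- `#(X, d, ε)`: the minimum cardinality of an open cover of `X` by sets of
`d`-diameter `< ε` (openness with respect to the given topology). -/
noncomputable def covNum (X : Type*) [TopologicalSpace X] (d : X → X → ℝ) (ε : ℝ) : ℕ :=
  sInf { n : ℕ | ∃ U : Fin n → Set X,
    (∀ i, IsOpen (U i)) ∧ (⋃ i, U i) = Set.univ ∧ ∀ i, sdiam d (U i) < ε }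

section aux
variable {X : Type*} [MetricSpace X]

noncomputable def dstar (u : ℕ → X) (x y : X) : ℝ :=
  ∑' n : ℕ, (2:ℝ)⁻¹ ^ (n+1) * |dist x (u n) - dist y (u n)|

lemma summable_geom_half : Summable (fun n : ℕ => (2:ℝ)⁻¹ ^ (n+1)) := by
  have : Summable (fun n : ℕ => (2:ℝ)⁻¹ ^ n) :=
    summable_geometric_of_lt_one (by norm_num) (by norm_num)
  exact (this.mul_left 2⁻¹).congr (fun n => (pow_succ' _ _).symm)

lemma tsum_half_pow : ∑' n : ℕ, (2:ℝ)⁻¹ ^ (n+1) = 1 := by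
  have h := tsum_geometric_two' 1
  rw [← h]
  refine tsum_congr fun n => ?_
  rw [pow_succ']
  field_simp
  rw [← mul_pow]; norm_num

lemma summable_dstar_term (u : ℕ → X) (x y : X) :
    Summable (fun n : ℕ => (2:ℝ)⁻¹ ^ (n+1) * |dist x (u n) - dist y (u n)|) :=
  Summable.of_nonneg_of_le (fun n => by positivity)
    (fun n => mul_le_mul_of_nonneg_left (abs_dist_sub_le _ _ _) (by positivity))
    (summable_geom_half.mul_right (dist x y))

lemma dstar_nonneg (u : ℕ → X) (x y : X) : 0 ≤ dstar u x y :=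
  tsum_nonneg fun n => by positivity

lemma dstar_le_dist (u : ℕ → X) (x y : X) : dstar u x y ≤ dist x y := by
  calc dstar u x y ≤ ∑' n : ℕ, (2:ℝ)⁻¹ ^ (n+1) * dist x y :=
        Summable.tsum_le_tsum (fun n => mul_le_mul_of_nonneg_left (abs_dist_sub_le _ _ _) (by positivity))
          (summable_dstar_term u x y) (summable_geom_half.mul_right (dist x y))
    _ = (∑' n : ℕ, (2:ℝ)⁻¹ ^ (n+1)) * dist x y := tsum_mul_right
    _ = dist x y := by rw [tsum_half_pow, one_mul]

lemma dstar_comm (u : ℕ → X) (x y : X) : dstar u x y = dstar u y x :=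
  tsum_congr fun n => by rw [abs_sub_comm]

lemma dstar_self (u : ℕ → X) (x : X) : dstar u x x = 0 := by
  simp [dstar]

lemma dstar_triangle (u : ℕ → X) (x y z : X) : dstar u x z ≤ dstar u x y + dstar u y z := by
  rw [dstar, dstar, dstar, ← Summable.tsum_add (summable_dstar_term u x y) (summable_dstar_term u y z)]
  refine Summable.tsum_le_tsum (fun n => ?_) (summable_dstar_term u x z)
    ((summable_dstar_term u x y).add (summable_dstar_term u y z))
  rw [← mul_add]
  refine mul_le_mul_of_nonneg_left ?_ (by positivity)
  exact (abs_sub_le _ _ _)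

lemma dstar_pos (u : ℕ → X) (hu : DenseRange u) {x y : X} (hxy : x ≠ y) : 0 < dstar u x y := by
  obtain ⟨n, hn⟩ := hu.exists_dist_lt x (half_pos (dist_pos.2 hxy))
  have h1 : 0 < (2:ℝ)⁻¹ ^ (n+1) * |dist x (u n) - dist y (u n)| := by
    have h2 : dist x y ≤ dist x (u n) + dist y (u n) := by
      rw [dist_comm y (u n)]; exact dist_triangle _ _ _
    have h3 : dist x y - 2 * dist x (u n) ≤ |dist x (u n) - dist y (u n)| := by
      have := neg_abs_le (dist x (u n) - dist y (u n))
      have := le_abs_self (dist x (u n) - dist y (u n))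
      rw [abs_sub_comm]
      calc dist x y - 2 * dist x (u n) ≤ dist y (u n) - dist x (u n) := by linarith
        _ ≤ |dist y (u n) - dist x (u n)| := le_abs_self _
    have h4 : 0 < dist x y - 2 * dist x (u n) := by linarith
    exact mul_pos (by positivity) (lt_of_lt_of_le h4 h3)
  calc (0:ℝ) < _ := h1
    _ ≤ dstar u x y := Summable.le_tsum (summable_dstar_term u x y) n (fun m _ => by positivity)

lemma dstar_lipschitz (u : ℕ → X) (x : X) : Continuous (fun y => dstar u x y) := by
  refine (LipschitzWith.of_dist_le_mul (K := 1) (f := fun y => dstar u x y) ?_).continuous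
  intro y z
  show dist (dstar u x y) (dstar u x z) ≤ _
  rw [Real.dist_eq, NNReal.coe_one, one_mul, abs_le]
  have h1 := dstar_triangle u x y z
  have h2 := dstar_le_dist u y z
  have h3 := dstar_triangle u x z y
  have h4 := dstar_le_dist u z y
  rw [dist_comm z y] at h4
  constructor <;> linarith


lemma covNum_dstar_le (u : ℕ → X) {D ε : ℝ}
    (hD : ∀ x y : X, dist x y ≤ D) (hε : 0 < ε) (N k : ℕ)
    (hN : (2:ℝ)⁻¹ ^ N * D < ε/4) (hk : D ≤ k * (ε/4)) :
    covNum X (dstar u) ε ≤ (k+1)^N := by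
  have hq0 : 0 < ε/4 := by positivity
  set q : ℝ := ε/4 with hq
  -- the boxes
  set V : (Fin N → Fin (k+1)) → Set X := fun j =>
    ⋂ n : Fin N, (fun x => dist x (u n)) ⁻¹'
      (Set.Ioo (((j n : ℕ) : ℝ) * q - q) (((j n : ℕ) : ℝ) * q + q)) with hV
  have hVopen : ∀ j, IsOpen (V j) := fun j =>
    isOpen_iInter_of_finite fun n =>
      (isOpen_Ioo).preimage (Continuous.dist continuous_id continuous_const)
  have hVcover : ∀ x : X, ∃ j, x ∈ V j := by
    intro x
    have hle : ∀ n : ℕ, ⌊dist x (u n) / q⌋₊ ≤ k := by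
      intro n
      have h1 : dist x (u n) / q ≤ (k:ℝ) := by
        rw [div_le_iff₀ hq0]; exact (hD x (u n)).trans hk
      calc ⌊dist x (u n) / q⌋₊ ≤ ⌊(k:ℝ)⌋₊ := Nat.floor_le_floor h1
        _ = k := Nat.floor_natCast k
    refine ⟨fun n => ⟨⌊dist x (u (n:ℕ)) / q⌋₊, Nat.lt_succ_of_le (hle n)⟩, ?_⟩
    rw [hV]
    refine Set.mem_iInter.2 fun n => ?_
    simp only [Set.mem_preimage, Set.mem_Ioo]
    have hd0 : 0 ≤ dist x (u (n:ℕ)) / q := by positivity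
    have hfl : (⌊dist x (u (n:ℕ)) / q⌋₊ : ℝ) * q ≤ dist x (u (n:ℕ)) :=
      (le_div_iff₀ hq0).1 (Nat.floor_le hd0)
    have hfl2 : dist x (u (n:ℕ)) < ((⌊dist x (u (n:ℕ)) / q⌋₊ : ℝ) + 1) * q :=
      (div_lt_iff₀ hq0).1 (Nat.lt_floor_add_one _)
    constructor
    · linarith
    · linarith
  have hVdiam : ∀ j, sdiam (dstar u) (V j) < ε := by
    intro j
    have key : ∀ x ∈ V j, ∀ y ∈ V j, dstar u x y ≤ 3/4 * ε := by
      intro x hx y hy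
      have hcoord : ∀ n : Fin N, |dist x (u n) - dist y (u n)| ≤ ε/2 := by
        intro n
        have hx' := Set.mem_iInter.1 hx n
        have hy' := Set.mem_iInter.1 hy n
        simp only [Set.mem_preimage, Set.mem_Ioo] at hx' hy'
        rw [abs_le]
        constructor
        · have := hx'.1; have := hy'.2; linarith
        · have := hx'.2; have := hy'.1; linarith
      have hsum := Summable.sum_add_tsum_nat_add
        (f := fun n => (2:ℝ)⁻¹^(n+1) * |dist x (u n) - dist y (u n)|) N
        (summable_dstar_term u x y)
      have hfin : ∑ n ∈ Finset.range N, (2:ℝ)⁻¹^(n+1) * |dist x (u n) - dist y (u n)| ≤ ε/2 := by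
        calc ∑ n ∈ Finset.range N, (2:ℝ)⁻¹^(n+1) * |dist x (u n) - dist y (u n)|
            ≤ ∑ n ∈ Finset.range N, (2:ℝ)⁻¹^(n+1) * (ε/2) := by
              refine Finset.sum_le_sum fun n hn => mul_le_mul_of_nonneg_left ?_ (by positivity)
              exact hcoord ⟨n, Finset.mem_range.1 hn⟩
          _ = (∑ n ∈ Finset.range N, (2:ℝ)⁻¹^(n+1)) * (ε/2) := by rw [Finset.sum_mul]
          _ ≤ 1 * (ε/2) := by
              refine mul_le_mul_of_nonneg_right ?_ (by positivity)
              rw [← tsum_half_pow]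
              exact Summable.sum_le_tsum _ (fun n _ => by positivity) summable_geom_half
          _ = ε/2 := one_mul _
      have hsummtail : Summable
          (fun n : ℕ => (2:ℝ)⁻¹^((n+N)+1) * |dist x (u (n+N)) - dist y (u (n+N))|) :=
        (summable_dstar_term u x y).comp_injective (add_left_injective N)
      have htail : ∑' n : ℕ, (2:ℝ)⁻¹^((n+N)+1) * |dist x (u (n+N)) - dist y (u (n+N))|
          ≤ (2:ℝ)⁻¹^N * D := by
        calc ∑' n : ℕ, (2:ℝ)⁻¹^((n+N)+1) * |dist x (u (n+N)) - dist y (u (n+N))|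
            ≤ ∑' n : ℕ, (2:ℝ)⁻¹^N * ((2:ℝ)⁻¹^(n+1) * D) := by
              refine Summable.tsum_le_tsum (fun n => ?_) hsummtail
                ((summable_geom_half.mul_right D).mul_left _)
              have habs : |dist x (u (n+N)) - dist y (u (n+N))| ≤ D :=
                (abs_dist_sub_le _ _ _).trans (hD x y)
              have hpow : (2:ℝ)⁻¹^((n+N)+1) = (2:ℝ)⁻¹^N * (2:ℝ)⁻¹^(n+1) := by ring
              rw [hpow, mul_assoc]
              exact mul_le_mul_of_nonneg_left
                (mul_le_mul_of_nonneg_left habs (by positivity)) (by positivity)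
          _ = (2:ℝ)⁻¹^N * ((∑' n : ℕ, (2:ℝ)⁻¹^(n+1)) * D) := by
              rw [tsum_mul_left, tsum_mul_right]
          _ = (2:ℝ)⁻¹^N * D := by rw [tsum_half_pow, one_mul]
      have hds : dstar u x y
          = (∑ n ∈ Finset.range N, (2:ℝ)⁻¹^(n+1) * |dist x (u n) - dist y (u n)|)
            + ∑' n : ℕ, (2:ℝ)⁻¹^((n+N)+1) * |dist x (u (n+N)) - dist y (u (n+N))| := by
        rw [dstar, ← hsum]
      rw [hds]
      linarith
    refine lt_of_le_of_lt (Real.sSup_le ?_ (by positivity)) (by linarith : 3/4*ε < ε)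
    rintro z ⟨a, ha, b, hb, rfl⟩
    exact key a ha b hb
  refine Nat.sInf_le ?_
  refine ⟨fun i => V (finFunctionFinEquiv.symm i), fun i => hVopen _, ?_, fun i => hVdiam _⟩
  ext x
  simp only [Set.mem_iUnion, Set.mem_univ, iff_true]
  obtain ⟨j, hj⟩ := hVcover x
  exact ⟨finFunctionFinEquiv j, by rw [Equiv.symm_apply_apply]; exact hj⟩

end aux

section bound
variable {X : Type*} [MetricSpace X]

lemma logb_nat_nonneg (n : ℕ) : 0 ≤ Real.logb 2 n := by
  rcases Nat.eq_zero_or_pos n with h | h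
  · simp [h]
  · exact Real.logb_nonneg one_lt_two (by exact_mod_cast h)

set_option maxHeartbeats 1000000 in
lemma logb_covNum_bound (u : ℕ → X) {D ε : ℝ}
    (hD : ∀ x y : X, dist x y ≤ D) (hD1 : 1 ≤ D)
    (hε0 : 0 < ε) (hε1 : ε ≤ 1/2) (hε2 : 16*D^2*ε ≤ 1) :
    Real.logb 2 (covNum X (dstar u) ε) ≤ 64 * (Real.log ε)^2 := by
  set t : ℝ := 4*D/ε with htdef
  have ht8 : 8 ≤ t := by
    rw [htdef, le_div_iff₀ hε0]; nlinarith
  have ht0 : (0:ℝ) < t := by linarith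
  set N : ℕ := ⌈Real.logb 2 t⌉₊ + 1 with hNdef
  set k : ℕ := ⌈t⌉₊ with hkdef
  have hS0 : 0 ≤ Real.logb 2 t := Real.logb_nonneg one_lt_two (by linarith)
  have hNgt : Real.logb 2 t < (N:ℝ) := by
    rw [hNdef]; push_cast; linarith [Nat.le_ceil (Real.logb 2 t)]
  have h2N : t < (2:ℝ)^N := by
    have := (Real.logb_lt_iff_lt_rpow one_lt_two ht0).1 hNgt
    rwa [Real.rpow_natCast] at this
  have heqD : t * (ε/4) = D := by
    rw [htdef]; field_simp
  have hNbd : (2:ℝ)⁻¹ ^ N * D < ε/4 := by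
    have hp : (0:ℝ) < 2^N := by positivity
    rw [inv_pow, inv_mul_eq_div, div_lt_iff₀ hp]
    nlinarith
  have hkbd : D ≤ (k:ℝ) * (ε/4) := by
    have := Nat.le_ceil t
    nlinarith
  have hcov := covNum_dstar_le u hD hε0 N k hNbd hkbd
  rcases Nat.eq_zero_or_pos (covNum X (dstar u) ε) with h0 | hpos
  · rw [h0]; simp; positivity
  · set c : ℕ := covNum X (dstar u) ε
    have hc1 : (0:ℝ) < (c:ℝ) := by exact_mod_cast hpos
    have hcle : (c:ℝ) ≤ ((k+1:ℕ):ℝ) ^ N := by exact_mod_cast hcov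
    have step1 : Real.logb 2 (c:ℝ) ≤ (N:ℝ) * Real.logb 2 ((k+1:ℕ):ℝ) := by
      rw [← Real.logb_pow]
      exact Real.logb_le_logb_of_le one_lt_two hc1 hcle
    set S : ℝ := Real.logb 2 t with hSdef
    have hS3 : 3 ≤ S := by
      have h1 : Real.logb 2 ((2:ℝ)^(3:ℕ)) ≤ S :=
        Real.logb_le_logb_of_le one_lt_two (by positivity) (by norm_num; linarith)
      rwa [Real.logb_pow, Real.logb_self_eq_one one_lt_two, mul_one] at h1
    have hNle : (N:ℝ) ≤ S + 2 := by
      rw [hNdef]; push_cast; linarith [Nat.ceil_lt_add_one hS0]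
    have hk1 : ((k+1:ℕ):ℝ) ≤ t^2 := by
      have h1 : (k:ℝ) < t + 1 := Nat.ceil_lt_add_one ht0.le
      push_cast; nlinarith
    have step2 : Real.logb 2 ((k+1:ℕ):ℝ) ≤ 2 * S := by
      have h1 : Real.logb 2 ((k+1:ℕ):ℝ) ≤ Real.logb 2 (t^2) :=
        Real.logb_le_logb_of_le one_lt_two (by positivity) hk1
      rwa [show t^2 = t^(2:ℕ) by norm_num, Real.logb_pow] at h1
    have hklognn : 0 ≤ Real.logb 2 ((k+1:ℕ):ℝ) :=
      Real.logb_nonneg one_lt_two (by exact_mod_cast Nat.succ_le_succ (Nat.zero_le k))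
    have step3 : Real.logb 2 (c:ℝ) ≤ (S + 2) * (2 * S) := by
      calc Real.logb 2 (c:ℝ) ≤ (N:ℝ) * Real.logb 2 ((k+1:ℕ):ℝ) := step1
        _ ≤ (S + 2) * (2 * S) := mul_le_mul hNle step2 hklognn (by linarith)
    -- now bound S in terms of log ε
    have h4D : 4*D*ε ≤ 1 := by nlinarith
    have h4Dinv : 4*D ≤ ε⁻¹ := by
      have h1 : 4*D*ε ≤ ε⁻¹*ε := by rw [inv_mul_cancel₀ hε0.ne']; exact h4D
      exact le_of_mul_le_mul_right h1 hε0
    have htle : t ≤ (ε⁻¹)^2 := by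
      rw [htdef, div_le_iff₀ hε0]
      have heq2 : (ε⁻¹)^2 * ε = ε⁻¹ := by field_simp
      rw [heq2]; exact h4Dinv
    have hlogt0 : 0 ≤ Real.log t := Real.log_nonneg (by linarith)
    have hlogt : Real.log t ≤ 2 * Real.log ε⁻¹ := by
      have h1 : Real.log t ≤ Real.log ((ε⁻¹)^2) := Real.log_le_log ht0 htle
      rw [Real.log_pow] at h1
      push_cast at h1
      linarith
    have hl2 : (0.6931471803:ℝ) < Real.log 2 := Real.log_two_gt_d9
    have hS_le : S ≤ 2 * Real.log t := by
      have h : S = Real.log t / Real.log 2 := by rw [hSdef, ← Real.log_div_log]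
      rw [h, div_le_iff₀ (by linarith : (0:ℝ) < Real.log 2)]
      have hh := mul_nonneg hlogt0 (show (0:ℝ) ≤ 2*Real.log 2 - 1 by linarith)
      nlinarith [hh]
    have hSM : S ≤ -4 * Real.log ε := by
      rw [Real.log_inv] at hlogt
      linarith
    have hsq : S * S ≤ (-4 * Real.log ε) * (-4 * Real.log ε) :=
      mul_le_mul hSM hSM (by linarith) (by linarith)
    nlinarith [step3, hS3, hsq]

end bound

lemma tendsto_helper {δ : ℝ} (hδ : 0 < δ) :
    Tendsto (fun ε : ℝ => ε ^ δ * (64 * Real.log ε ^ 2)) (𝓝[>] (0:ℝ)) (𝓝 0) := by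
  have h := (isLittleO_abs_log_rpow_rpow_nhdsGT_zero 2
    (neg_lt_zero.2 hδ)).tendsto_div_nhds_zero
  have h64 := h.const_mul (64:ℝ)
  rw [mul_zero] at h64
  refine h64.congr' ?_
  filter_upwards [self_mem_nhdsWithin] with x hx
  have hx0 : (0:ℝ) < x := hx
  have h1 : |Real.log x| ^ (2:ℝ) = Real.log x ^ 2 := by
    rw [show (2:ℝ) = ((2:ℕ):ℝ) by norm_num, Real.rpow_natCast, sq_abs]
  rw [Real.rpow_neg hx0.le, h1, div_inv_eq_mul]
  ring

/-- Every compact metric space admits a smaller compatible metric with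
the tame growth of covering numbers: there is `d'` with `d' ≤ d`, `d'` a metric inducing
the given topology, and for every `δ > 0`, `ε^δ · log₂ #(X, d', ε) → 0` as `ε → 0⁺`. -/
theorem stmt3 (X : Type*) [MetricSpace X] [CompactSpace X] :
    ∃ d' : X → X → ℝ,
      (∀ x y, 0 ≤ d' x y) ∧
      (∀ x y, d' x y = 0 ↔ x = y) ∧
      (∀ x y, d' x y = d' y x) ∧
      (∀ x y z, d' x z ≤ d' x y + d' y z) ∧
      (∀ s : Set X, IsOpen s ↔ ∀ x ∈ s, ∃ ε > 0, { y | d' x y < ε } ⊆ s) ∧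
      (∀ x y, d' x y ≤ dist x y) ∧
      (∀ δ > (0:ℝ), Tendsto (fun ε : ℝ => ε ^ δ * Real.logb 2 (covNum X d' ε))
        (𝓝[>] 0) (𝓝 0)) := by
  rcases isEmpty_or_nonempty X with hX | hX
  · refine ⟨fun _ _ => 0, fun x => isEmptyElim x, fun x => isEmptyElim x, fun x => isEmptyElim x,
      fun x => isEmptyElim x, ?_, fun x => isEmptyElim x, ?_⟩
    · intro s
      refine iff_of_true ?_ (fun x hx => isEmptyElim x)
      rw [Set.eq_empty_of_isEmpty s]; exact isOpen_empty
    · intro δ hδ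
      have hc : ∀ ε : ℝ, covNum X (fun _ _ => (0:ℝ)) ε = 0 := by
        intro ε
        refine Nat.sInf_eq_zero.2 (Or.inl ⟨Fin.elim0, fun i => i.elim0, ?_, fun i => i.elim0⟩)
        ext x; exact isEmptyElim x
      simp only [hc, Nat.cast_zero, Real.logb_zero, mul_zero]
      exact tendsto_const_nhds
  · obtain ⟨u, hu⟩ := TopologicalSpace.exists_dense_seq X
    refine ⟨dstar u, dstar_nonneg u, ?_, dstar_comm u, dstar_triangle u, ?_, dstar_le_dist u, ?_⟩
    · intro x y
      constructor
      · intro h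
        by_contra hxy
        exact absurd h (dstar_pos u hu hxy).ne'
      · rintro rfl; exact dstar_self u x
    · intro s
      constructor
      · intro hs x hx
        by_cases hK : sᶜ = ∅
        · refine ⟨1, one_pos, fun y _ => ?_⟩
          have hsu : s = Set.univ := Set.compl_empty_iff.1 hK
          rw [hsu]; trivial
        · have hKc : IsCompact sᶜ := hs.isClosed_compl.isCompact
          obtain ⟨y₀, hy₀, hmin⟩ := hKc.exists_isMinOn (Set.nonempty_iff_ne_empty.2 hK)
            (dstar_lipschitz u x).continuousOn
          refine ⟨dstar u x y₀, ?_, ?_⟩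
          · exact dstar_pos u hu (fun h => hy₀ (h ▸ hx))
          · intro y hy
            by_contra hy'
            have hge : dstar u x y₀ ≤ dstar u x y := isMinOn_iff.1 hmin y hy'
            exact absurd hge (not_le.2 hy)
      · intro h
        rw [Metric.isOpen_iff]
        intro x hx
        obtain ⟨ε, hε, hsub⟩ := h x hx
        refine ⟨ε, hε, fun y hy => hsub ?_⟩
        have hyx : dist y x < ε := hy
        calc dstar u x y ≤ dist x y := dstar_le_dist u x y
          _ < ε := by rwa [dist_comm]
    · intro δ hδ
      set D : ℝ := max (Metric.diam (Set.univ : Set X)) 1 with hDdef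
      have hD1 : 1 ≤ D := le_max_right _ _
      have hDd : ∀ x y : X, dist x y ≤ D := fun x y =>
        le_trans (Metric.dist_le_diam_of_mem isCompact_univ.isBounded
          (Set.mem_univ x) (Set.mem_univ y)) (le_max_left _ _)
      have hε₀ : (0:ℝ) < min (1/2) (1/(16*D^2)) := by positivity
      refine squeeze_zero' ?_ ?_ (tendsto_helper hδ)
      · filter_upwards [self_mem_nhdsWithin] with ε hε
        have hε' : (0:ℝ) < ε := hε
        exact mul_nonneg (Real.rpow_nonneg hε'.le δ) (logb_nat_nonneg _)
      · filter_upwards [Ioo_mem_nhdsGT_of_mem (Set.left_mem_Ico.2 hε₀)] with ε hε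
        obtain ⟨hε0, hεlt⟩ := hε
        have hε1 : ε ≤ 1/2 := le_trans hεlt.le (min_le_left _ _)
        have hε2 : 16*D^2*ε ≤ 1 := by
          have h2 := le_trans hεlt.le (min_le_right _ _)
          have h3 := (le_div_iff₀ (by positivity : (0:ℝ) < 16*D^2)).1 h2
          nlinarith
        exact mul_le_mul_of_nonneg_left
          (logb_covNum_bound u hDd hD1 hε0 hε1 hε2) (Real.rpow_nonneg hε0.le δ)
end

section
/- Let $(\mathcal{X},\mathbf{d})$ be a compact metric space, $P$ a (finite) simplicial complex, $\varphi:\mathcal{X}\to\mathbb{R}$ continuous, and $\varepsilon>0$. Then $\operatorname{widim}'_\varepsilon(\mathcal{X},\mathbf{d},\varphi) \le \operatorname{widim}_\varepsilon(\mathcal{X},\mathbf{d},\varphi) \le \operatorname{widim}'_\varepsilon(\mathcal{X},\mathbf{d},\varphi) + \operatorname{var}_\varepsilon(\varphi,\mathbf{d})$, where $\operatorname{var}_\varepsilon(\varphi,\mathbf{d}) = \sup\{|\varphi(x)-\varphi(y)| : \mathbf{d}(x,y)<\varepsilon\}$. -/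
open Filter Set Topology

/-- The covering quantity with potential:
`#(X, d, ψ, ε) = inf { ∑ᵢ (1/ε)^(sup_{Uᵢ} ψ) }` over finite open covers
`X = U₁ ∪ ⋯ ∪ Uₙ` with `diam(Uᵢ, d) < ε` for all `i`. -/
noncomputable def covPot (X : Type*) [TopologicalSpace X] (d : X → X → ℝ)
    (ψ : X → ℝ) (ε : ℝ) : ℝ :=
  sInf { r : ℝ | ∃ (n : ℕ) (U : Fin n → Set X),
    (∀ i, IsOpen (U i)) ∧ (⋃ i, U i) = Set.univ ∧ (∀ i, sdiam d (U i) < ε) ∧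
    r = ∑ i, (1 / ε) ^ (sSup (ψ '' U i)) }

/-- The dynamical metric `d_N(x,y) = max_{0 ≤ n < N} d(Tⁿ x, Tⁿ y)`. -/
noncomputable def dynMet {X : Type*} [PseudoMetricSpace X] (T : X → X) (N : ℕ)
    (x y : X) : ℝ :=
  (((Finset.range N).sup fun n => nndist (T^[n] x) (T^[n] y)) : NNReal)

/-- The Birkhoff sum `S_N φ (x) = ∑_{n=0}^{N-1} φ(Tⁿ x)`. -/
noncomputable def birk {X : Type*} (T : X → X) (φ : X → ℝ) (N : ℕ) (x : X) : ℝ :=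
  ∑ n ∈ Finset.range N, φ (T^[n] x)

/-- `P(X, T, d, φ, ε) = lim_N (1/N) log₂ #(X, d_N, S_N φ, ε)` (the limit exists by
subadditivity; we use `limsup` to have a total definition). -/
noncomputable def PPot (X : Type*) [PseudoMetricSpace X]
    (T : X → X) (φ : X → ℝ) (ε : ℝ) : ℝ :=
  limsup (fun N : ℕ =>
    Real.logb 2 (covPot X (dynMet T N) (birk T φ N) ε) / N) atTop

/-- Upper metric mean dimension with potential. -/
noncomputable def mdimMSup (X : Type*) [MetricSpace X] (T : X → X) (φ : X → ℝ) : ℝ :=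
  limsup (fun ε : ℝ => PPot X T φ ε / Real.logb 2 (1 / ε)) (𝓝[>] 0)

/-- Lower metric mean dimension with potential. -/
noncomputable def mdimMInf (X : Type*) [MetricSpace X] (T : X → X) (φ : X → ℝ) : ℝ :=
  liminf (fun ε : ℝ => PPot X T φ ε / Real.logb 2 (1 / ε)) (𝓝[>] 0)

/-- A finite (abstract) simplicial complex: a nonempty-face, downward-closed family of
nonempty subsets of the vertex set `Fin k`. -/
structure FinSC where
  k : ℕ
  faces : Finset (Finset (Fin k))
  nonempty_mem : ∀ s ∈ faces, s.Nonempty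
  down_closed : ∀ s ∈ faces, ∀ t ⊆ s, t.Nonempty → t ∈ faces

open Classical in
/-- The support of a barycentric-coordinate vector. -/
noncomputable def fsupp {k : ℕ} (w : Fin k → ℝ) : Finset (Fin k) :=
  Finset.univ.filter fun i => w i ≠ 0

/-- The geometric realization of `P`, as the set of barycentric coordinate vectors
whose support is a face of `P`. -/
noncomputable def FinSC.space (P : FinSC) : Set (Fin P.k → ℝ) :=
  { w | (∀ i, 0 ≤ w i) ∧ (∑ i, w i) = 1 ∧ fsupp w ∈ P.faces }

/-- The local dimension `dim_a P`: the maximal dimension of a simplex of `P`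
containing the point `a` (given by barycentric coordinates `w`). -/
noncomputable def FinSC.locdim (P : FinSC) (w : Fin P.k → ℝ) : ℕ :=
  sSup { m : ℕ | ∃ s ∈ P.faces, fsupp w ⊆ s ∧ m = s.card - 1 }

/-- The small local dimension `dim'_a P`: the minimal dimension of a simplex of `P`
containing the point `a`. -/
noncomputable def FinSC.locdim' (P : FinSC) (w : Fin P.k → ℝ) : ℕ :=
  sInf { m : ℕ | ∃ s ∈ P.faces, fsupp w ⊆ s ∧ m = s.card - 1 }

/-- The dimension of `P`: the maximal dimension of a simplex of `P`. -/
noncomputable def FinSC.dim (P : FinSC) : ℕ :=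
  sSup { m : ℕ | ∃ s ∈ P.faces, m = s.card - 1 }

/-- The open star `O_P(v)` of a vertex `v`: the union of the open simplexes of `P`
having `v` as a vertex, i.e. the points of `|P|` whose `v`-coordinate is nonzero. -/
noncomputable def FinSC.star (P : FinSC) (v : Fin P.k) : Set (Fin P.k → ℝ) :=
  { w ∈ P.space | w v ≠ 0 }

/-- `F` is (the face set of) a subcomplex of `P`. -/
def FinSC.IsSubcomplex (P : FinSC) (F : Finset (Finset (Fin P.k))) : Prop :=
  F ⊆ P.faces ∧ ∀ s ∈ F, ∀ t ⊆ s, t.Nonempty → t ∈ F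

/-- The geometric realization of the subcomplex of `P` with face set `F`. -/
noncomputable def FinSC.subSpace (P : FinSC) (F : Finset (Finset (Fin P.k))) :
    Set (Fin P.k → ℝ) :=
  { w | (∀ i, 0 ≤ w i) ∧ (∑ i, w i) = 1 ∧ fsupp w ∈ F }

/-- A continuous map `f : X → |P|` is essential if no proper subcomplex of `P`
contains the image of `f`. -/
def FinSC.Essential {X : Type*} (P : FinSC) (f : X → (Fin P.k → ℝ)) : Prop :=
  ∀ F : Finset (Finset (Fin P.k)), P.IsSubcomplex F → (∀ x, f x ∈ P.subSpace F) →
    F = P.faces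

/-- `widim_ε(X, d, φ)`: the infimum of `max_x (dim_{f(x)} P + φ(x))` over all finite
simplicial complexes `P` and `ε`-embeddings `f : X → |P|` (continuous maps all of
whose fibers have `d`-diameter `< ε`). -/
noncomputable def widimPot (X : Type*) [TopologicalSpace X] (d : X → X → ℝ)
    (φ : X → ℝ) (ε : ℝ) : ℝ :=
  sInf { r : ℝ | ∃ (P : FinSC) (f : X → (Fin P.k → ℝ)), Continuous f ∧
    (∀ x, f x ∈ P.space) ∧ (∀ p : Fin P.k → ℝ, sdiam d (f ⁻¹' {p}) < ε) ∧
    r = sSup (Set.range fun x => (P.locdim (f x) : ℝ) + φ x) }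

/-- `widim'_ε(X, d, φ)`: as `widim_ε` but with the small local dimension `dim'`. -/
noncomputable def widimPot' (X : Type*) [TopologicalSpace X] (d : X → X → ℝ)
    (φ : X → ℝ) (ε : ℝ) : ℝ :=
  sInf { r : ℝ | ∃ (P : FinSC) (f : X → (Fin P.k → ℝ)), Continuous f ∧
    (∀ x, f x ∈ P.space) ∧ (∀ p : Fin P.k → ℝ, sdiam d (f ⁻¹' {p}) < ε) ∧
    r = sSup (Set.range fun x => (P.locdim' (f x) : ℝ) + φ x) }

/-- `var_ε(φ, d) = sup { |φ(x) - φ(y)| : d(x,y) < ε }`. -/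
noncomputable def varPot {X : Type*} (d : X → X → ℝ) (φ : X → ℝ) (ε : ℝ) : ℝ :=
  sSup { r : ℝ | ∃ x y, d x y < ε ∧ r = |φ x - φ y| }

section SDAux

variable {k : ℕ}

/-- max of `z` over `s`, at least `0`. -/
noncomputable def fmax (s : Finset (Fin k)) (z : Fin k → ℝ) : ℝ := s.fold max 0 z

/-- min of `z` over `s`, at most `2`. -/
noncomputable def fmin (s : Finset (Fin k)) (z : Fin k → ℝ) : ℝ := s.fold min 2 z

lemma fmax_nonneg (s : Finset (Fin k)) (z : Fin k → ℝ) : 0 ≤ fmax s z := by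
  induction s using Finset.cons_induction with
  | empty => simp [fmax]
  | cons a s ha ih => rw [fmax, Finset.fold_cons]; exact le_max_of_le_right ih

lemma le_fmax {s : Finset (Fin k)} {z : Fin k → ℝ} {i : Fin k} (h : i ∈ s) :
    z i ≤ fmax s z := by
  induction s using Finset.cons_induction with
  | empty => simp at h
  | cons a s ha ih =>
    rw [fmax, Finset.fold_cons]
    rcases Finset.mem_cons.1 h with rfl | h
    · exact le_max_left _ _
    · exact le_max_of_le_right (ih h)

lemma fmax_le {s : Finset (Fin k)} {z : Fin k → ℝ} {c : ℝ} (h0 : 0 ≤ c)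
    (h : ∀ i ∈ s, z i ≤ c) : fmax s z ≤ c := by
  induction s using Finset.cons_induction with
  | empty => simpa [fmax]
  | cons a s ha ih =>
    rw [fmax, Finset.fold_cons]
    exact max_le (h a (Finset.mem_cons_self _ _))
      (ih fun i hi => h i (Finset.mem_cons_of_mem hi))

lemma fmin_le {s : Finset (Fin k)} {z : Fin k → ℝ} {i : Fin k} (h : i ∈ s) :
    fmin s z ≤ z i := by
  induction s using Finset.cons_induction with
  | empty => simp at h
  | cons a s ha ih =>
    rw [fmin, Finset.fold_cons]
    rcases Finset.mem_cons.1 h with rfl | h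
    · exact min_le_left _ _
    · exact min_le_of_right_le (ih h)

lemma lt_fmin {s : Finset (Fin k)} {z : Fin k → ℝ} {c : ℝ} (h2 : c < 2)
    (h : ∀ i ∈ s, c < z i) : c < fmin s z := by
  induction s using Finset.cons_induction with
  | empty => simpa [fmin]
  | cons a s ha ih =>
    rw [fmin, Finset.fold_cons]
    exact lt_min (h a (Finset.mem_cons_self _ _))
      (ih fun i hi => h i (Finset.mem_cons_of_mem hi))

lemma continuous_fmax (s : Finset (Fin k)) : Continuous fun z : Fin k → ℝ => fmax s z := by
  induction s using Finset.cons_induction with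
  | empty => simpa [fmax] using continuous_const
  | cons a s ha ih =>
    simp only [fmax, Finset.fold_cons]
    exact (continuous_apply a).max ih

lemma continuous_fmin (s : Finset (Fin k)) : Continuous fun z : Fin k → ℝ => fmin s z := by
  induction s using Finset.cons_induction with
  | empty => simpa [fmin] using continuous_const
  | cons a s ha ih =>
    simp only [fmin, Finset.fold_cons]
    exact (continuous_apply a).min ih

/-- The "outside bound": max of `z` outside `s`, at least `0`. -/
noncomputable def outB (s : Finset (Fin k)) (z : Fin k → ℝ) : ℝ := fmax sᶜ z

/-- Barycentric coordinate of the point in the subdivision. -/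
noncomputable def rho (s : Finset (Fin k)) (z : Fin k → ℝ) : ℝ :=
  (s.card : ℝ) * max 0 (fmin s z - outB s z)

/-- `i`-th coordinate of the barycenter of the face `s`. -/
noncomputable def bCoord (s : Finset (Fin k)) (i : Fin k) : ℝ :=
  if i ∈ s then ((s.card : ℝ))⁻¹ else 0

open Classical in
/-- Level set of `z` above `t`. -/
noncomputable def lev (z : Fin k → ℝ) (t : ℝ) : Finset (Fin k) :=
  Finset.univ.filter fun i => t < z i

open Classical in
lemma mem_lev {z : Fin k → ℝ} {t : ℝ} {i : Fin k} : i ∈ lev z t ↔ t < z i := by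
  simp [lev]

lemma rho_nonneg (s : Finset (Fin k)) (z : Fin k → ℝ) : 0 ≤ rho s z :=
  mul_nonneg (Nat.cast_nonneg _) (le_max_left _ _)

lemma continuous_rho (s : Finset (Fin k)) : Continuous fun z : Fin k → ℝ => rho s z :=
  continuous_const.mul (continuous_const.max ((continuous_fmin s).sub (continuous_fmax sᶜ)))

lemma rho_ne_iff {s : Finset (Fin k)} {z : Fin k → ℝ} :
    rho s z ≠ 0 ↔ s.Nonempty ∧ outB s z < fmin s z := by
  constructor
  · intro h
    rcases s.eq_empty_or_nonempty with rfl | hs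
    · simp [rho] at h
    refine ⟨hs, ?_⟩
    by_contra hc
    push_neg at hc
    apply h
    simp [rho, max_eq_left (sub_nonpos.2 hc)]
  · rintro ⟨hs, h⟩
    have h1 : (0:ℝ) < s.card := by exact_mod_cast hs.card_pos
    have h2 : (0:ℝ) < max 0 (fmin s z - outB s z) := by
      rw [max_eq_right (sub_nonneg.2 h.le)]; linarith
    exact ne_of_gt (mul_pos h1 h2)

lemma lt_of_rho_ne {s : Finset (Fin k)} {z : Fin k → ℝ} (h : rho s z ≠ 0)
    {i : Fin k} (hi : i ∈ s) : outB s z < z i :=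
  lt_of_lt_of_le (rho_ne_iff.1 h).2 (fmin_le hi)

lemma le_of_not_mem {s : Finset (Fin k)} {z : Fin k → ℝ} {j : Fin k} (hj : j ∉ s) :
    z j ≤ outB s z :=
  le_fmax (Finset.mem_compl.2 hj)

lemma rho_subset_supp {s : Finset (Fin k)} {z : Fin k → ℝ} (h : rho s z ≠ 0) :
    s ⊆ fsupp z := by
  intro i hi
  have h1 : 0 < z i := lt_of_le_of_lt (fmax_nonneg _ _) (lt_of_rho_ne h hi)
  simp [fsupp, ne_of_gt h1]

lemma rho_chain {s t : Finset (Fin k)} {z : Fin k → ℝ} (hs : rho s z ≠ 0)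
    (ht : rho t z ≠ 0) : s ⊆ t ∨ t ⊆ s := by
  by_cases hst : s ⊆ t
  · exact Or.inl hst
  right
  obtain ⟨i, his, hit⟩ := Finset.not_subset.1 hst
  intro j hjt
  by_contra hjs
  have h1 : z j ≤ outB s z := le_of_not_mem hjs
  have h2 : z i ≤ outB t z := le_of_not_mem hit
  have h3 := lt_of_rho_ne hs his
  have h4 := lt_of_rho_ne ht hjt
  linarith

lemma eq_lev_of_Ico {s : Finset (Fin k)} {z : Fin k → ℝ} {t : ℝ}
    (h1 : outB s z ≤ t) (h2 : t < fmin s z) : s = lev z t := by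
  ext j
  rw [mem_lev]
  constructor
  · intro hj
    exact lt_of_lt_of_le h2 (fmin_le hj)
  · intro hj
    by_contra hjs
    exact absurd (le_trans (le_of_not_mem hjs) h1) (not_le.2 hj)

lemma rho_ident (z : Fin k → ℝ) (h0 : ∀ i, 0 ≤ z i) (h1 : ∀ i, z i ≤ 1)
    (F : Finset (Finset (Fin k))) (hne : ∀ s ∈ F, s.Nonempty)
    (hlev : ∀ t : ℝ, 0 ≤ t → (lev z t).Nonempty → lev z t ∈ F) (i : Fin k) :
    ∑ s ∈ F, rho s z * bCoord s i = z i := by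
  classical
  have key : ∀ s ∈ F, rho s z * bCoord s i =
      ∫ t : ℝ, (if i ∈ s then (Set.Ico (outB s z) (fmin s z)).indicator (1 : ℝ → ℝ) t else (0:ℝ)) := by
    intro s hs
    by_cases his : i ∈ s
    · simp only [his, if_true]
      rw [MeasureTheory.integral_indicator_one measurableSet_Ico, MeasureTheory.measureReal_def, Real.volume_Ico]
      have hcard : ((s.card : ℝ)) ≠ 0 := by
        exact_mod_cast (hne s hs).card_pos.ne'
      rw [rho, bCoord, if_pos his]
      rw [mul_comm ((s.card:ℝ)) _, mul_assoc, mul_inv_cancel₀ hcard, mul_one]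
      rcases le_or_gt (outB s z) (fmin s z) with h | h
      · rw [ENNReal.toReal_ofReal (by linarith), max_eq_right (by linarith)]
      · rw [ENNReal.ofReal_of_nonpos (by linarith), max_eq_left (by linarith)]
        simp
    · simp [bCoord, his]
  rw [Finset.sum_congr rfl key]
  have hint : ∀ s ∈ F, MeasureTheory.Integrable
      (fun t : ℝ => (if i ∈ s then (Set.Ico (outB s z) (fmin s z)).indicator (1 : ℝ → ℝ) t else (0:ℝ))) := by
    intro s hs
    by_cases his : i ∈ s
    · simp only [his, if_true]
      exact (MeasureTheory.integrable_indicator_iff measurableSet_Ico).2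
        ((MeasureTheory.integrableOn_const_iff).2 (Or.inr measure_Ico_lt_top))
    · simp only [his, if_false]
      exact MeasureTheory.integrable_zero _ _ _
  rw [← MeasureTheory.integral_finset_sum F hint]
  have hpt : ∀ t : ℝ,
      (∑ s ∈ F, (if i ∈ s then (Set.Ico (outB s z) (fmin s z)).indicator (1 : ℝ → ℝ) t else (0:ℝ))) =
      (Set.Ico (0:ℝ) (z i)).indicator (1 : ℝ → ℝ) t := by
    intro t
    by_cases hti : 0 ≤ t ∧ t < z i
    · have hlevmem : lev z t ∈ F := hlev t hti.1 ⟨i, mem_lev.2 hti.2⟩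
      rw [Finset.sum_eq_single_of_mem (lev z t) hlevmem, Set.indicator_of_mem (Set.mem_Ico.2 hti)]
      · have hilev : i ∈ lev z t := mem_lev.2 hti.2
        have hB : outB (lev z t) z ≤ t := by
          apply fmax_le hti.1
          intro j hj
          have := Finset.mem_compl.1 hj
          rw [mem_lev] at this
          push_neg at this
          exact this
        have hA : t < fmin (lev z t) z := by
          apply lt_fmin (by linarith [h1 i, hti.2])
          intro j hj
          exact mem_lev.1 hj
        rw [if_pos hilev, Set.indicator_of_mem (Set.mem_Ico.2 ⟨hB, hA⟩)]
      · intro s hsF hsne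
        by_cases his : i ∈ s
        · rw [if_pos his]
          by_cases hmem : t ∈ Set.Ico (outB s z) (fmin s z)
          · exact absurd (eq_lev_of_Ico hmem.1 hmem.2) hsne
          · exact Set.indicator_of_notMem hmem _
        · exact if_neg his
    · rw [Set.indicator_of_notMem (fun hmem => hti (Set.mem_Ico.1 hmem))]
      apply Finset.sum_eq_zero
      intro s hs
      by_cases his : i ∈ s
      · rw [if_pos his]
        by_cases hmem : t ∈ Set.Ico (outB s z) (fmin s z)
        · exfalso
          apply hti
          constructor
          · exact le_trans (le_trans (fmax_nonneg _ _) hmem.1) le_rfl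
          · exact lt_of_lt_of_le hmem.2 (fmin_le his)
        · exact Set.indicator_of_notMem hmem _
      · exact if_neg his
  calc ∫ t : ℝ, (∑ s ∈ F, (if i ∈ s then (Set.Ico (outB s z) (fmin s z)).indicator (1 : ℝ → ℝ) t else (0:ℝ)))
      = ∫ t : ℝ, (Set.Ico (0:ℝ) (z i)).indicator (1 : ℝ → ℝ) t := by
        refine MeasureTheory.integral_congr_ae (Filter.Eventually.of_forall hpt)
    _ = z i := by
        rw [MeasureTheory.integral_indicator_one measurableSet_Ico, MeasureTheory.measureReal_def, Real.volume_Ico,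
          sub_zero, ENNReal.toReal_ofReal (h0 i)]

end SDAux
section SDComplex

lemma mem_fsupp {k : ℕ} {w : Fin k → ℝ} {i : Fin k} : i ∈ fsupp w ↔ w i ≠ 0 := by
  classical
  simp [fsupp]

/-- The unit vector. -/
noncomputable def unitv {k : ℕ} (i : Fin k) : Fin k → ℝ := fun i' => if i' = i then 1 else 0

lemma unitv_nonneg {k : ℕ} (i i' : Fin k) : 0 ≤ unitv i i' := by
  unfold unitv; split <;> norm_num

lemma unitv_sum {k : ℕ} (i : Fin k) : ∑ i', unitv i i' = 1 := by
  simp [unitv]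

lemma unitv_supp {k : ℕ} (i : Fin k) : fsupp (unitv i) ⊆ {i} := by
  intro i' h
  rw [mem_fsupp] at h
  unfold unitv at h
  simp only [Finset.mem_singleton]
  by_contra hc
  exact h (if_neg hc)

namespace FinSC

variable (P : FinSC)

/-- Enumeration of the faces of `P`. -/
noncomputable def emb (j : Fin P.faces.card) : Finset (Fin P.k) :=
  (P.faces.equivFin.symm j : {x // x ∈ P.faces})

lemma emb_mem (j : Fin P.faces.card) : P.emb j ∈ P.faces :=
  (P.faces.equivFin.symm j).2

lemma emb_nonempty (j : Fin P.faces.card) : (P.emb j).Nonempty :=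
  P.nonempty_mem _ (P.emb_mem j)

lemma emb_injective : Function.Injective P.emb := by
  intro a b h
  have := P.faces.equivFin.symm.injective (Subtype.ext h)
  exact this

open Classical in
/-- The barycentric subdivision of `P` (as an abstract complex: faces are chains). -/
noncomputable def sd : FinSC where
  k := P.faces.card
  faces := Finset.univ.filter fun S : Finset (Fin P.faces.card) =>
    S.Nonempty ∧ ∀ a ∈ S, ∀ b ∈ S, P.emb a ⊆ P.emb b ∨ P.emb b ⊆ P.emb a
  nonempty_mem := fun s hs => (Finset.mem_filter.1 hs).2.1
  down_closed := fun s hs t hts htne => Finset.mem_filter.2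
    ⟨Finset.mem_univ _, htne, fun a ha b hb =>
      (Finset.mem_filter.1 hs).2.2 a (hts ha) b (hts hb)⟩

open Classical in
lemma mem_sd_faces {S : Finset (Fin P.faces.card)} :
    S ∈ P.sd.faces ↔ S.Nonempty ∧
      ∀ a ∈ S, ∀ b ∈ S, P.emb a ⊆ P.emb b ∨ P.emb b ⊆ P.emb a := by
  constructor
  · intro h
    exact (Finset.mem_filter.1 h).2
  · intro h
    exact Finset.mem_filter.2 ⟨Finset.mem_univ _, h⟩

/-- The subdivision map. -/
noncomputable def sdMap : (Fin P.k → ℝ) → (Fin P.sd.k → ℝ) :=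
  fun z j => rho (P.emb j) z

/-- The linear map back from the subdivision. -/
noncomputable def sdBackL : (Fin P.sd.k → ℝ) →ₗ[ℝ] (Fin P.k → ℝ) where
  toFun := fun c i => ∑ j, c j * bCoord (P.emb j) i
  map_add' := fun c d => by
    funext i
    simp only [Pi.add_apply, add_mul, Finset.sum_add_distrib]
  map_smul' := fun a c => by
    funext i
    simp only [Pi.smul_apply, RingHom.id_apply, smul_eq_mul, mul_assoc, Finset.mul_sum]

lemma continuous_sdMap : Continuous P.sdMap :=
  continuous_pi fun j => continuous_rho _

/-- The barycenter vector of the `j`-th face. -/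
noncomputable def bvec (j : Fin P.faces.card) : Fin P.k → ℝ :=
  fun i => bCoord (P.emb j) i

lemma sdBackL_eq_sum (c : Fin P.sd.k → ℝ) :
    P.sdBackL c = ∑ j, c j • P.bvec j := by
  funext i
  rw [Finset.sum_apply]
  simp only [sdBackL, LinearMap.coe_mk, AddHom.coe_mk, Pi.smul_apply, smul_eq_mul]
  rfl

lemma bvec_eq_sum (j : Fin P.faces.card) :
    P.bvec j = ∑ i ∈ P.emb j, (((P.emb j).card : ℝ))⁻¹ • unitv i := by
  funext i'
  rw [Finset.sum_apply]
  simp only [Pi.smul_apply, smul_eq_mul, unitv, mul_ite, mul_one, mul_zero]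
  rw [Finset.sum_ite_eq (P.emb j) i' fun _ => (((P.emb j).card : ℝ))⁻¹]
  rfl

variable {P}
variable {z : Fin P.k → ℝ}

lemma space_le_one (hz : z ∈ P.space) (i : Fin P.k) : z i ≤ 1 := by
  obtain ⟨h0, h1, _⟩ := hz
  calc z i ≤ ∑ i', z i' := Finset.single_le_sum (fun i' _ => h0 i') (Finset.mem_univ i)
    _ = 1 := h1

lemma space_lev_mem (hz : z ∈ P.space) {t : ℝ} (ht : 0 ≤ t) (hne : (lev z t).Nonempty) :
    lev z t ∈ P.faces := by
  obtain ⟨h0, h1, hsupp⟩ := hz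
  refine P.down_closed _ hsupp _ ?_ hne
  intro j hj
  rw [mem_lev] at hj
  exact mem_fsupp.2 (ne_of_gt (lt_of_le_of_lt ht hj))

lemma sum_over_faces (G : Finset (Fin P.k) → ℝ) :
    ∑ j, G (P.emb j) = ∑ s ∈ P.faces, G s := by
  rw [← Finset.sum_coe_sort P.faces G]
  exact Equiv.sum_comp P.faces.equivFin.symm fun a => G a.val

lemma sdBackL_sdMap (hz : z ∈ P.space) : P.sdBackL (P.sdMap z) = z := by
  funext i
  show ∑ j, rho (P.emb j) z * bCoord (P.emb j) i = z i
  rw [sum_over_faces (fun s => rho s z * bCoord s i)]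
  exact rho_ident z hz.1 (space_le_one hz) P.faces P.nonempty_mem
    (fun t ht hne => space_lev_mem hz ht hne) i

lemma sum_bCoord {s : Finset (Fin P.k)} (hs : s.Nonempty) : ∑ i, bCoord s i = 1 := by
  unfold bCoord
  rw [Finset.sum_ite_mem, Finset.univ_inter, Finset.sum_const, nsmul_eq_mul]
  rw [mul_inv_cancel₀]
  exact_mod_cast hs.card_pos.ne'

lemma sum_sdMap (hz : z ∈ P.space) : ∑ j, P.sdMap z j = 1 := by
  have h1 : ∑ i, P.sdBackL (P.sdMap z) i = 1 := by rw [sdBackL_sdMap hz]; exact hz.2.1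
  have h2 : ∑ i, P.sdBackL (P.sdMap z) i = ∑ j, P.sdMap z j := by
    show ∑ i, ∑ j, P.sdMap z j * bCoord (P.emb j) i = _
    rw [Finset.sum_comm]
    refine Finset.sum_congr rfl fun j _ => ?_
    rw [← Finset.mul_sum, sum_bCoord (P.emb_nonempty j), mul_one]
  rw [← h2, h1]

lemma rho_fsupp_ne (hz : z ∈ P.space) : rho (fsupp z) z ≠ 0 := by
  refine rho_ne_iff.2 ⟨P.nonempty_mem _ hz.2.2, ?_⟩
  have hB : outB (fsupp z) z ≤ 0 := by
    apply fmax_le le_rfl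
    intro j hj
    have := Finset.mem_compl.1 hj
    rw [mem_fsupp] at this
    push_neg at this
    exact le_of_eq this
  have hA : (0:ℝ) < fmin (fsupp z) z := by
    apply lt_fmin (by norm_num)
    intro i hi
    exact lt_of_le_of_ne (hz.1 i) (Ne.symm (mem_fsupp.1 hi))
  linarith

lemma sdMap_mem (hz : z ∈ P.space) : P.sdMap z ∈ P.sd.space := by
  refine ⟨fun j => rho_nonneg _ _, sum_sdMap hz, ?_⟩
  apply (mem_sd_faces P).2
  constructor
  · refine ⟨P.faces.equivFin ⟨fsupp z, hz.2.2⟩, ?_⟩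
    apply mem_fsupp.2
    show rho (P.emb _) z ≠ 0
    unfold emb
    rw [Equiv.symm_apply_apply]
    exact rho_fsupp_ne hz
  · intro a ha b hb
    replace ha := mem_fsupp.1 ha; replace hb := mem_fsupp.1 hb
    exact rho_chain ha hb

/-- Cardinality bound for chains. -/
lemma chain_card_le {S : Finset (Fin P.faces.card)} {n : ℕ}
    (hchain : ∀ a ∈ S, ∀ b ∈ S, P.emb a ⊆ P.emb b ∨ P.emb b ⊆ P.emb a)
    (hb : ∀ a ∈ S, 1 ≤ (P.emb a).card ∧ (P.emb a).card ≤ n) : S.card ≤ n := by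
  have h := Finset.card_le_card_of_injOn (fun a => (P.emb a).card)
    (fun a ha => Finset.mem_Icc.2 (hb a ha)) (t := Finset.Icc 1 n) ?_
  · simpa [Nat.card_Icc] using h
  · intro a ha b hb' hab
    apply P.emb_injective
    rcases hchain a (by exact ha) b (by exact hb') with h' | h'
    · exact Finset.eq_of_subset_of_card_le h' (le_of_eq hab.symm)
    · exact (Finset.eq_of_subset_of_card_le h' (le_of_eq hab)).symm

lemma sdMap_supp_card (hz : z ∈ P.space) :
    (fsupp (P.sdMap z)).card ≤ (fsupp z).card := by
  apply chain_card_le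
  · intro a ha b hb
    replace ha := mem_fsupp.1 ha; replace hb := mem_fsupp.1 hb
    exact rho_chain ha hb
  · intro a ha
    replace ha := mem_fsupp.1 ha
    have hsub : P.emb a ⊆ fsupp z := rho_subset_supp ha
    exact ⟨(P.emb_nonempty a).card_pos, Finset.card_le_card hsub⟩

/-- The maximal cardinality of a face. -/
noncomputable def maxCard (P : FinSC) : ℕ := P.faces.sup Finset.card

lemma face_card_le_maxCard (P : FinSC) {s : Finset (Fin P.k)} (hs : s ∈ P.faces) :
    s.card ≤ P.maxCard := Finset.le_sup hs

lemma sd_maxCard_le (P : FinSC) : P.sd.maxCard ≤ P.maxCard := by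
  apply Finset.sup_le
  intro S hS
  replace hS := (mem_sd_faces P).1 hS
  exact chain_card_le hS.2 fun a ha =>
    ⟨(P.emb_nonempty a).card_pos, P.face_card_le_maxCard (P.emb_mem a)⟩

/-- Iterated subdivision complex. -/
noncomputable def itC (P : FinSC) : ℕ → FinSC
  | 0 => P
  | (N+1) => (itC P N).sd

/-- Iterated subdivision map. -/
noncomputable def itH (P : FinSC) : (N : ℕ) → (Fin P.k → ℝ) → (Fin (P.itC N).k → ℝ)
  | 0 => id
  | (N+1) => (P.itC N).sdMap ∘ itH P N

/-- Iterated linear back map. -/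
noncomputable def itB (P : FinSC) : (N : ℕ) → ((Fin (P.itC N).k → ℝ) →ₗ[ℝ] (Fin P.k → ℝ))
  | 0 => LinearMap.id
  | (N+1) => (itB P N).comp (P.itC N).sdBackL

lemma itH_mem (hz : z ∈ P.space) : ∀ N, P.itH N z ∈ (P.itC N).space
  | 0 => hz
  | (N+1) => sdMap_mem (itH_mem hz N)

lemma itB_itH (hz : z ∈ P.space) : ∀ N, P.itB N (P.itH N z) = z
  | 0 => rfl
  | (N+1) => by
    show (P.itB N) ((P.itC N).sdBackL ((P.itC N).sdMap (P.itH N z))) = z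
    rw [sdBackL_sdMap (itH_mem hz N)]
    exact itB_itH hz N

lemma itH_continuous (P : FinSC) : ∀ N, Continuous (P.itH N)
  | 0 => continuous_id
  | (N+1) => ((P.itC N).continuous_sdMap).comp (itH_continuous P N)

lemma itH_supp_card (hz : z ∈ P.space) : ∀ N, (fsupp (P.itH N z)).card ≤ (fsupp z).card
  | 0 => le_rfl
  | (N+1) => le_trans (sdMap_supp_card (itH_mem hz N)) (itH_supp_card hz N)

lemma itC_maxCard (P : FinSC) : ∀ N, (P.itC N).maxCard ≤ P.maxCard
  | 0 => le_rfl
  | (N+1) => le_trans (P.itC N).sd_maxCard_le (itC_maxCard P N)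

end FinSC

end SDComplex
section NormLemmas

variable {E : Type*} [NormedAddCommGroup E] [NormedSpace ℝ E] {ι : Type*} [DecidableEq ι]

lemma center_bound (s : Finset ι) (u : ι → E) (mu : ι → ℝ) (w : E) {D : ℝ}
    (hm0 : ∀ j ∈ s, 0 ≤ mu j) (hm1 : ∑ j ∈ s, mu j = 1)
    (h : ∀ b ∈ s, ‖w - u b‖ ≤ D) :
    ‖w - ∑ b ∈ s, mu b • u b‖ ≤ D := by
  have e1 : w - ∑ b ∈ s, mu b • u b = ∑ b ∈ s, mu b • (w - u b) := by
    rw [Finset.sum_congr rfl (fun b _ => smul_sub (mu b) w (u b)), Finset.sum_sub_distrib,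
      ← Finset.sum_smul, hm1, one_smul]
  rw [e1]
  calc ‖∑ b ∈ s, mu b • (w - u b)‖ ≤ ∑ b ∈ s, ‖mu b • (w - u b)‖ := norm_sum_le _ _
    _ ≤ ∑ b ∈ s, mu b * D := by
        refine Finset.sum_le_sum fun b hb => ?_
        rw [norm_smul, Real.norm_eq_abs, abs_of_nonneg (hm0 b hb)]
        exact mul_le_mul_of_nonneg_left (h b hb) (hm0 b hb)
    _ = D := by rw [← Finset.sum_mul, hm1, one_mul]

lemma combo_bound (s : Finset ι) (u : ι → E) (lam mu : ι → ℝ) {D : ℝ}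
    (hl0 : ∀ j ∈ s, 0 ≤ lam j) (hm0 : ∀ j ∈ s, 0 ≤ mu j)
    (hl1 : ∑ j ∈ s, lam j = 1) (hm1 : ∑ j ∈ s, mu j = 1)
    (hD : ∀ a ∈ s, ∀ b ∈ s, ‖u a - u b‖ ≤ D) :
    ‖(∑ a ∈ s, lam a • u a) - ∑ b ∈ s, mu b • u b‖ ≤ D := by
  rw [norm_sub_rev]
  apply center_bound s u lam _ hl0 hl1
  intro a ha
  rw [norm_sub_rev]
  apply center_bound s u mu (u a) hm0 hm1
  intro b hb
  exact hD a ha b hb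

lemma avg_bound (s : Finset ι) (hs : s.Nonempty) (u : ι → E) (mu : ι → ℝ) {D : ℝ}
    (hm0 : ∀ j ∈ s, 0 ≤ mu j) (hm1 : ∑ j ∈ s, mu j = 1)
    (hD : ∀ a ∈ s, ∀ b ∈ s, ‖u a - u b‖ ≤ D) :
    ‖(∑ a ∈ s, ((s.card : ℝ))⁻¹ • u a) - ∑ b ∈ s, mu b • u b‖
      ≤ (1 - ((s.card : ℝ))⁻¹) * D := by
  have hm : (0:ℝ) < (s.card : ℝ) := by exact_mod_cast hs.card_pos
  apply center_bound s u mu _ hm0 hm1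
  intro b hb
  have e1 : (∑ a ∈ s, ((s.card : ℝ))⁻¹ • u a) - u b
      = ∑ a ∈ s, ((s.card : ℝ))⁻¹ • (u a - u b) := by
    rw [Finset.sum_congr rfl (fun a _ => smul_sub (((s.card : ℝ))⁻¹) (u a) (u b)),
      Finset.sum_sub_distrib]
    congr 1
    rw [← Finset.sum_smul, Finset.sum_const, nsmul_eq_mul, mul_inv_cancel₀ hm.ne', one_smul]
  rw [e1]
  calc ‖∑ a ∈ s, ((s.card : ℝ))⁻¹ • (u a - u b)‖
      ≤ ∑ a ∈ s, ‖((s.card : ℝ))⁻¹ • (u a - u b)‖ := norm_sum_le _ _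
    _ = ∑ a ∈ s, ((s.card : ℝ))⁻¹ * ‖u a - u b‖ := by
        refine Finset.sum_congr rfl fun a _ => ?_
        rw [norm_smul, Real.norm_eq_abs, abs_of_nonneg (inv_nonneg.2 hm.le)]
    _ = ∑ a ∈ s.erase b, ((s.card : ℝ))⁻¹ * ‖u a - u b‖ := by
        rw [← Finset.sum_erase_add s _ hb]
        simp
    _ ≤ ∑ _a ∈ s.erase b, ((s.card : ℝ))⁻¹ * D := by
        refine Finset.sum_le_sum fun a ha => ?_
        exact mul_le_mul_of_nonneg_left (hD a (Finset.mem_of_mem_erase ha) b hb)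
          (inv_nonneg.2 hm.le)
    _ = ((s.card - 1 : ℕ) : ℝ) * (((s.card : ℝ))⁻¹ * D) := by
        rw [Finset.sum_const, Finset.card_erase_of_mem hb, nsmul_eq_mul]
    _ = (1 - ((s.card : ℝ))⁻¹) * D := by
        rw [Nat.cast_sub hs.card_pos, Nat.cast_one]
        field_simp

end NormLemmas

namespace FinSC

lemma theta_nonneg (P : FinSC) : 0 ≤ 1 - ((P.maxCard : ℝ))⁻¹ := by
  rcases Nat.eq_zero_or_pos P.maxCard with h | h
  · simp [h]
  · have h1 : (1:ℝ) ≤ (P.maxCard : ℝ) := by exact_mod_cast h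
    have h2 : ((P.maxCard : ℝ))⁻¹ ≤ 1 := by
      rw [← one_div]
      exact (div_le_one (by linarith)).2 h1
    linarith

lemma mesh (P : FinSC) : ∀ N : ℕ, ∀ S ∈ (P.itC N).faces, ∀ c c' : Fin (P.itC N).k → ℝ,
    (∀ j, 0 ≤ c j) → (∑ j, c j) = 1 → fsupp c ⊆ S →
    (∀ j, 0 ≤ c' j) → (∑ j, c' j) = 1 → fsupp c' ⊆ S →
    ‖P.itB N c - P.itB N c'‖ ≤ (1 - ((P.maxCard : ℝ))⁻¹) ^ N := by
  intro N
  induction N with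
  | zero =>
    intro S hS c c' hc0 hc1 hcS hc'0 hc'1 hc'S
    show ‖c - c'‖ ≤ 1
    rw [← dist_eq_norm]
    rw [dist_pi_le_iff (by norm_num)]
    intro i
    have h1 : c i ≤ 1 := by
      calc c i ≤ ∑ j, c j := Finset.single_le_sum (fun j _ => hc0 j) (Finset.mem_univ i)
        _ = 1 := hc1
    have h2 : c' i ≤ 1 := by
      calc c' i ≤ ∑ j, c' j := Finset.single_le_sum (fun j _ => hc'0 j) (Finset.mem_univ i)
        _ = 1 := hc'1
    rw [Real.dist_eq]
    apply abs_le.2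
    constructor
    · linarith [hc0 i, hc'0 i]
    · linarith [hc0 i, hc'0 i]
  | succ N ih =>
    intro S hS c c' hc0 hc1 hcS hc'0 hc'1 hc'S
    set Q := P.itC N with hQ
    set th := (1 - ((P.maxCard : ℝ))⁻¹) with hth
    have hth0 : 0 ≤ th := P.theta_nonneg
    have hthN : (0:ℝ) ≤ th ^ N := pow_nonneg hth0 N
    set w : Fin Q.faces.card → (Fin P.k → ℝ) := fun j => P.itB N (Q.bvec j) with hw
    set u : Fin Q.k → (Fin P.k → ℝ) := fun i => P.itB N (unitv i) with hu
    -- expansion of itB (N+1)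
    have hexp : ∀ d : Fin (P.itC (N+1)).k → ℝ, fsupp d ⊆ S →
        P.itB (N+1) d = ∑ j ∈ S, d j • w j := by
      intro d hdS
      have e1 : P.itB (N+1) d = P.itB N (Q.sdBackL d) := rfl
      rw [e1]; erw [Q.sdBackL_eq_sum]; rw [map_sum]
      have e2 : ∀ j, P.itB N (d j • Q.bvec j) = d j • w j := fun j => map_smul _ _ _
      refine Eq.trans (Finset.sum_congr rfl fun j _ => e2 j) ?_
      refine (Finset.sum_subset S.subset_univ fun j _ hj => ?_).symm
      have : d j = 0 := by
        by_contra hne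
        exact hj (hdS (mem_fsupp.2 hne))
      rw [this, zero_smul]
    have hsum : ∀ d : Fin (P.itC (N+1)).k → ℝ, fsupp d ⊆ S → (∑ j, d j) = 1 →
        ∑ j ∈ S, d j = 1 := by
      intro d hdS hd1
      rw [← hd1]
      refine Finset.sum_subset S.subset_univ fun j _ hj => ?_
      by_contra hne
      exact hj (hdS (mem_fsupp.2 hne))
    rw [hexp c hcS, hexp c' hc'S]
    -- chain property of S
    have hchain := (mem_sd_faces Q).1 hS
    -- the one-sided pairwise bound
    have haux : ∀ a b : Fin Q.faces.card, b ∈ S → Q.emb a ⊆ Q.emb b →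
        ‖w b - w a‖ ≤ th ^ (N + 1) := by
      intro a b hbS hab
      set sb := Q.emb b with hsb
      have hsbne : sb.Nonempty := Q.emb_nonempty b
      have hsane : (Q.emb a).Nonempty := Q.emb_nonempty a
      have hpair : ∀ i ∈ sb, ∀ i' ∈ sb, ‖u i - u i'‖ ≤ th ^ N := by
        intro i hi i' hi'
        exact ih sb (Q.emb_mem b) (unitv i) (unitv i') (unitv_nonneg i) (unitv_sum i)
          (le_trans (unitv_supp i) (Finset.singleton_subset_iff.2 hi))
          (unitv_nonneg i') (unitv_sum i')
          (le_trans (unitv_supp i') (Finset.singleton_subset_iff.2 hi'))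
      have hwb : w b = ∑ i ∈ sb, ((sb.card : ℝ))⁻¹ • u i := by
        rw [hw]
        show P.itB N (Q.bvec b) = _
        rw [Q.bvec_eq_sum b, map_sum]
        exact Finset.sum_congr rfl fun i _ => map_smul _ _ _
      set mu : Fin Q.k → ℝ := fun i => if i ∈ Q.emb a then (((Q.emb a).card : ℝ))⁻¹ else 0
        with hmu
      have hmucard : ((Q.emb a).card : ℝ) ≠ 0 := by
        exact_mod_cast hsane.card_pos.ne'
      have hwa : w a = ∑ i ∈ sb, mu i • u i := by
        rw [hw]
        show P.itB N (Q.bvec a) = _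
        rw [Q.bvec_eq_sum a, map_sum]
        have e4 : ∑ i ∈ Q.emb a, (P.itB N) ((((Q.emb a).card : ℝ))⁻¹ • unitv i)
            = ∑ i ∈ Q.emb a, (((Q.emb a).card : ℝ))⁻¹ • u i :=
          Finset.sum_congr rfl fun i _ => map_smul _ _ _
        have e5 : ∑ i ∈ sb, mu i • u i = ∑ i ∈ Q.emb a, mu i • u i :=
          (Finset.sum_subset hab fun i _ hi => by
            rw [hmu]; simp only [if_neg hi, zero_smul]).symm
        have e6 : ∑ i ∈ Q.emb a, mu i • u i
            = ∑ i ∈ Q.emb a, (((Q.emb a).card : ℝ))⁻¹ • u i :=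
          Finset.sum_congr rfl fun i hi => by rw [hmu]; simp only [if_pos hi]
        rw [e4, e5, e6]
      have hmu0 : ∀ i ∈ sb, 0 ≤ mu i := by
        intro i _
        rw [hmu]
        dsimp only
        split
        · positivity
        · exact le_rfl
      have hmu1 : ∑ i ∈ sb, mu i = 1 := by
        have e8 : ∑ i ∈ sb, mu i = ∑ i ∈ Q.emb a, mu i :=
          (Finset.sum_subset hab fun i _ hi => by rw [hmu]; simp only [if_neg hi]).symm
        have e9 : ∑ i ∈ Q.emb a, mu i = ∑ _i ∈ Q.emb a, (((Q.emb a).card : ℝ))⁻¹ :=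
          Finset.sum_congr rfl fun i hi => by rw [hmu]; simp only [if_pos hi]
        rw [e8, e9, Finset.sum_const, nsmul_eq_mul, mul_inv_cancel₀ hmucard]
      rw [hwb, hwa]
      have h1 := avg_bound sb hsbne u mu hmu0 hmu1 hpair
      refine le_trans h1 ?_
      have hcard : (sb.card : ℝ) ≤ (P.maxCard : ℝ) := by
        have h2 : sb.card ≤ Q.maxCard := Q.face_card_le_maxCard (Q.emb_mem b)
        exact_mod_cast le_trans h2 (P.itC_maxCard N)
      have hsbpos : (0:ℝ) < (sb.card : ℝ) := by exact_mod_cast hsbne.card_pos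
      have hinv : ((P.maxCard : ℝ))⁻¹ ≤ ((sb.card : ℝ))⁻¹ := by
        rw [← one_div, ← one_div]
        exact one_div_le_one_div_of_le hsbpos hcard
      have h3 : (1 - ((sb.card : ℝ))⁻¹) ≤ th := by rw [hth]; linarith
      calc (1 - ((sb.card : ℝ))⁻¹) * th ^ N ≤ th * th ^ N :=
            mul_le_mul_of_nonneg_right h3 hthN
        _ = th ^ (N + 1) := by rw [pow_succ, mul_comm]
    have hpairw : ∀ a ∈ S, ∀ b ∈ S, ‖w a - w b‖ ≤ th ^ (N + 1) := by
      intro a ha b hb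
      rcases hchain.2 a ha b hb with h | h
      · rw [norm_sub_rev]; exact haux a b hb h
      · exact haux b a ha h
    exact combo_bound S w c c' (fun j _ => hc0 j) (fun j _ => hc'0 j)
      (hsum c hcS hc1) (hsum c' hc'S hc'1) hpairw

end FinSC
section Helpers

lemma sdiam_empty {X : Type*} (d : X → X → ℝ) : sdiam d (∅ : Set X) = 0 := by
  unfold sdiam
  rw [Set.image2_empty_left, Real.sSup_empty]

lemma sdiam_le_of_subset {X : Type*} {d : X → X → ℝ} {A B : Set X} (h : A ⊆ B)
    (hA : A.Nonempty) (hbdd : BddAbove (Set.image2 d B B)) :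
    sdiam d A ≤ sdiam d B :=
  csSup_le_csSup hbdd (hA.image2 hA) (Set.image2_subset h h)

lemma exists_dist_bound (X : Type*) [MetricSpace X] [CompactSpace X] :
    ∃ R, ∀ x y : X, dist x y ≤ R := by
  rcases isEmpty_or_nonempty X with hX | hX
  · exact ⟨0, fun x => isEmptyElim x⟩
  · have hcont : Continuous fun q : X × X => dist q.1 q.2 :=
      continuous_fst.dist continuous_snd
    obtain ⟨q0, -, hq0⟩ := isCompact_univ.exists_isMaxOn
      (Set.univ_nonempty) hcont.continuousOn
    exact ⟨dist q0.1 q0.2, fun x y => hq0 (Set.mem_univ (x, y))⟩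

lemma delta_lemma {X : Type*} [MetricSpace X] [CompactSpace X] {k : ℕ}
    {f : X → (Fin k → ℝ)} (hf : Continuous f) {ε : ℝ} (hε : 0 < ε)
    (hfib : ∀ p : Fin k → ℝ, sdiam dist (f ⁻¹' {p}) < ε) :
    ∃ δ > (0:ℝ), ∀ x y : X, dist (f x) (f y) ≤ δ → dist x y < ε := by
  obtain ⟨R, hR⟩ := exists_dist_bound X
  by_cases hC : ∃ q : X × X, ε ≤ dist q.1 q.2
  · set C : Set (X × X) := {q | ε ≤ dist q.1 q.2} with hCdef
    have hCc : IsClosed C := isClosed_le continuous_const (continuous_fst.dist continuous_snd)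
    have hcomp : IsCompact C := hCc.isCompact
    have hcont : Continuous fun q : X × X => dist (f q.1) (f q.2) :=
      (hf.comp continuous_fst).dist (hf.comp continuous_snd)
    obtain ⟨q0, hq0C, hq0min⟩ := hcomp.exists_isMinOn hC hcont.continuousOn
    have hpos : 0 < dist (f q0.1) (f q0.2) := by
      rcases lt_or_eq_of_le (dist_nonneg (x := f q0.1) (y := f q0.2)) with h | h
      · exact h
      · exfalso
        have hfq : f q0.1 = f q0.2 := by rw [← dist_eq_zero, ← h]
        have h1 : q0.1 ∈ f ⁻¹' {f q0.1} := rfl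
        have h2 : q0.2 ∈ f ⁻¹' {f q0.1} := by
          simp only [Set.mem_preimage, Set.mem_singleton_iff]
          exact hfq.symm
        have h3 : dist q0.1 q0.2 ≤ sdiam dist (f ⁻¹' {f q0.1}) := by
          apply le_csSup
          · exact ⟨R, by rintro r ⟨a, -, b, -, rfl⟩; exact hR a b⟩
          · exact Set.mem_image2_of_mem h1 h2
        exact absurd (lt_of_le_of_lt h3 (hfib (f q0.1))) (not_lt.2 hq0C)
    refine ⟨dist (f q0.1) (f q0.2) / 2, by positivity, ?_⟩
    intro x y hxy
    by_contra h
    push_neg at h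
    have hmem : (x, y) ∈ C := h
    have := hq0min hmem
    simp only [Set.mem_setOf_eq] at this
    have : dist (f q0.1) (f q0.2) ≤ dist (f x) (f y) := this
    linarith
  · push_neg at hC
    exact ⟨1, one_pos, fun x y _ => hC (x, y)⟩

namespace FinSC

variable {P : FinSC} {w : Fin P.k → ℝ}

lemma locdim_set_bddAbove (w : Fin P.k → ℝ) (F : Finset (Finset (Fin P.k))) :
    BddAbove {m : ℕ | ∃ s ∈ F, fsupp w ⊆ s ∧ m = s.card - 1} := by
  refine ⟨P.k, ?_⟩
  rintro m ⟨s, -, -, rfl⟩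
  calc s.card - 1 ≤ s.card := Nat.sub_le _ _
    _ ≤ Finset.univ.card := Finset.card_le_univ s
    _ = P.k := by rw [Finset.card_univ, Fintype.card_fin]

lemma locdim'_eq_card (hw : fsupp w ∈ P.faces) :
    P.locdim' w = (fsupp w).card - 1 := by
  unfold locdim'
  apply le_antisymm
  · exact Nat.sInf_le ⟨fsupp w, hw, subset_rfl, rfl⟩
  · refine le_csInf ⟨(fsupp w).card - 1, ⟨fsupp w, hw, subset_rfl, rfl⟩⟩ ?_
    rintro m ⟨s, -, hsub, rfl⟩
    exact Nat.sub_le_sub_right (Finset.card_le_card hsub) 1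

lemma locdim'_le_k (hw : fsupp w ∈ P.faces) : P.locdim' w ≤ P.k := by
  rw [locdim'_eq_card hw]
  calc (fsupp w).card - 1 ≤ (fsupp w).card := Nat.sub_le _ _
    _ ≤ Finset.univ.card := Finset.card_le_univ _
    _ = P.k := by rw [Finset.card_univ, Fintype.card_fin]

lemma locdim_mem (hw : fsupp w ∈ P.faces) :
    P.locdim w ∈ {m : ℕ | ∃ s ∈ P.faces, fsupp w ⊆ s ∧ m = s.card - 1} :=
  Nat.sSup_mem ⟨(fsupp w).card - 1, ⟨fsupp w, hw, subset_rfl, rfl⟩⟩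
    (locdim_set_bddAbove w P.faces)

lemma locdim_le_k (hw : fsupp w ∈ P.faces) : P.locdim w ≤ P.k := by
  obtain ⟨s, -, -, h⟩ := locdim_mem hw
  rw [h]
  calc s.card - 1 ≤ s.card := Nat.sub_le _ _
    _ ≤ Finset.univ.card := Finset.card_le_univ _
    _ = P.k := by rw [Finset.card_univ, Fintype.card_fin]

lemma locdim'_le_locdim (hw : fsupp w ∈ P.faces) : P.locdim' w ≤ P.locdim w :=
  Nat.sInf_le (locdim_mem hw)

end FinSC

end Helpers
section MainConstruction

open FinSC

lemma main_construction {X : Type*} [MetricSpace X] [CompactSpace X] [Nonempty X]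
    {φ : X → ℝ} {ε : ℝ} (hε : 0 < ε)
    (hvb : BddAbove {r : ℝ | ∃ x y : X, dist x y < ε ∧ r = |φ x - φ y|})
    {M : ℝ} (hM : ∀ x, φ x ≤ M)
    (P : FinSC) (f : X → (Fin P.k → ℝ)) (hf : Continuous f)
    (hmem : ∀ x, f x ∈ P.space) (hfib : ∀ p, sdiam dist (f ⁻¹' {p}) < ε) :
    ∃ r : ℝ, (∃ (Q : FinSC) (g : X → (Fin Q.k → ℝ)), Continuous g ∧
      (∀ x, g x ∈ Q.space) ∧ (∀ p : Fin Q.k → ℝ, sdiam dist (g ⁻¹' {p}) < ε) ∧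
      r = sSup (Set.range fun x => (Q.locdim (g x) : ℝ) + φ x)) ∧
      r ≤ sSup (Set.range fun x => (P.locdim' (f x) : ℝ) + φ x)
        + sSup {r : ℝ | ∃ x y : X, dist x y < ε ∧ r = |φ x - φ y|} := by
  classical
  obtain ⟨x₀⟩ := ‹Nonempty X›
  obtain ⟨R, hR⟩ := exists_dist_bound X
  obtain ⟨δ, hδ0, hδ⟩ := delta_lemma hf hε hfib
  set th : ℝ := 1 - ((P.maxCard : ℝ))⁻¹ with hth
  have hfaces_ne : (fsupp (f x₀)) ∈ P.faces := (hmem x₀).2.2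
  have hmc1 : 1 ≤ P.maxCard :=
    le_trans (P.nonempty_mem _ hfaces_ne).card_pos (P.face_card_le_maxCard hfaces_ne)
  have hthlt : th < 1 := by
    have h1 : (0:ℝ) < ((P.maxCard : ℝ))⁻¹ := by
      apply inv_pos.2
      exact_mod_cast Nat.lt_of_lt_of_le Nat.zero_lt_one hmc1
    rw [hth]; linarith
  obtain ⟨N, hN⟩ := exists_pow_lt_of_lt_one hδ0 hthlt
  set g : X → (Fin (P.itC N).k → ℝ) := fun x => P.itH N (f x) with hg
  have hgmem : ∀ x, g x ∈ (P.itC N).space := fun x => itH_mem (hmem x) N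
  have hgBack : ∀ x, P.itB N (g x) = f x := fun x => itB_itH (hmem x) N
  set Q : FinSC := ⟨(P.itC N).k,
    (P.itC N).faces.filter (fun s => ∃ x, s ⊆ fsupp (g x)),
    fun s hs => (P.itC N).nonempty_mem s (Finset.mem_filter.1 hs).1,
    fun s hs t hts htne => Finset.mem_filter.2
      ⟨(P.itC N).down_closed s (Finset.mem_filter.1 hs).1 t hts htne,
        by obtain ⟨x, hx⟩ := (Finset.mem_filter.1 hs).2; exact ⟨x, hts.trans hx⟩⟩⟩ with hQ
  have hgQ : ∀ x, g x ∈ Q.space := by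
    intro x
    refine ⟨(hgmem x).1, (hgmem x).2.1, ?_⟩
    exact Finset.mem_filter.2 ⟨(hgmem x).2.2, ⟨x, subset_rfl⟩⟩
  have hgcont : Continuous g := (itH_continuous P N).comp hf
  have hgfib : ∀ p, sdiam dist (g ⁻¹' {p}) < ε := by
    intro p
    rcases (g ⁻¹' {p}).eq_empty_or_nonempty with hemp | ⟨x1, hx1⟩
    · rw [hemp, sdiam_empty]; exact hε
    · have hsub : g ⁻¹' {p} ⊆ f ⁻¹' {f x1} := by
        intro x' hx'
        have h1 : g x' = g x1 := by
          simp only [Set.mem_preimage, Set.mem_singleton_iff] at hx' hx1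
          rw [hx', hx1]
        have h2 := congrArg (P.itB N) h1
        rw [hgBack x', hgBack x1] at h2
        exact h2
      exact lt_of_le_of_lt (sdiam_le_of_subset hsub ⟨x1, hx1⟩
        ⟨R, by rintro r ⟨a, -, b, -, rfl⟩; exact hR a b⟩) (hfib (f x1))
  set var := sSup {r : ℝ | ∃ x y : X, dist x y < ε ∧ r = |φ x - φ y|} with hvar
  set r' := sSup (Set.range fun x => (P.locdim' (f x) : ℝ) + φ x) with hr'
  have hr'bdd : BddAbove (Set.range fun x => (P.locdim' (f x) : ℝ) + φ x) := by
    refine ⟨(P.k : ℝ) + M, ?_⟩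
    rintro a ⟨y, rfl⟩
    have h1 : (P.locdim' (f y) : ℝ) ≤ (P.k : ℝ) := by
      exact_mod_cast locdim'_le_k (hmem y).2.2
    exact add_le_add h1 (hM y)
  have hpt : ∀ x, (Q.locdim (g x) : ℝ) + φ x ≤ r' + var := by
    intro x
    have hmemQ : fsupp (g x) ∈ Q.faces := (hgQ x).2.2
    obtain ⟨s, hsQ, hsub1, hcard⟩ := locdim_mem hmemQ
    obtain ⟨y, hsub2⟩ := (Finset.mem_filter.1 hsQ).2
    have hSy : fsupp (g y) ∈ (P.itC N).faces := (hgmem y).2.2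
    have hfxy : dist (f x) (f y) ≤ th ^ N := by
      rw [← hgBack x, ← hgBack y, dist_eq_norm]
      exact P.mesh N (fsupp (g y)) hSy (g x) (g y) (hgmem x).1 (hgmem x).2.1
        (hsub1.trans hsub2) (hgmem y).1 (hgmem y).2.1 subset_rfl
    have hdxy : dist x y < ε := hδ x y (le_trans hfxy hN.le)
    have hvmem : |φ x - φ y| ≤ var := le_csSup hvb ⟨x, y, hdxy, rfl⟩
    have hnat : Q.locdim (g x) ≤ P.locdim' (f y) := by
      rw [hcard, locdim'_eq_card (hmem y).2.2]
      have c1 : s.card ≤ (fsupp (g y)).card := Finset.card_le_card hsub2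
      have c2 : (fsupp (g y)).card ≤ (fsupp (f y)).card := itH_supp_card (hmem y) N
      exact Nat.sub_le_sub_right (le_trans c1 c2) 1
    have hy : (P.locdim' (f y) : ℝ) + φ y ≤ r' := le_csSup hr'bdd ⟨y, rfl⟩
    have hcast : (Q.locdim (g x) : ℝ) ≤ (P.locdim' (f y) : ℝ) := by exact_mod_cast hnat
    have habs : φ x - φ y ≤ |φ x - φ y| := le_abs_self _
    linarith
  refine ⟨_, ⟨Q, g, hgcont, hgQ, hgfib, rfl⟩, ?_⟩
  apply csSup_le (Set.range_nonempty _)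
  rintro a ⟨x, rfl⟩
  exact hpt x

end MainConstruction
/-- For a compact metric space `(X,d)`, continuous `φ` and `ε > 0`:
`widim'_ε(X,d,φ) ≤ widim_ε(X,d,φ) ≤ widim'_ε(X,d,φ) + var_ε(φ,d)`. -/
theorem stmt8 (X : Type*) [MetricSpace X] [CompactSpace X]
    (φ : X → ℝ) (hφ : Continuous φ) (ε : ℝ) (hε : 0 < ε) :
    widimPot' X dist φ ε ≤ widimPot X dist φ ε ∧
    widimPot X dist φ ε ≤ widimPot' X dist φ ε + varPot dist φ ε := by
  classical
  open FinSC in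
  rcases isEmpty_or_nonempty X with hX | hX
  · -- empty case
    have hvar : varPot (dist : X → X → ℝ) φ ε = 0 := by
      unfold varPot
      have h1 : {r : ℝ | ∃ x y : X, dist x y < ε ∧ r = |φ x - φ y|} = ∅ := by
        ext r
        simp only [Set.mem_setOf_eq, Set.mem_empty_iff_false, iff_false]
        rintro ⟨x, -⟩
        exact isEmptyElim x
      rw [h1, Real.sSup_empty]
    have hEq : widimPot X dist φ ε = widimPot' X dist φ ε := by
      unfold widimPot widimPot'
      congr 1
      ext r
      constructor
      · rintro ⟨P, f, h1, h2, h3, h4⟩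
        refine ⟨P, f, h1, h2, h3, ?_⟩
        rw [h4, Set.range_eq_empty, Set.range_eq_empty]
      · rintro ⟨P, f, h1, h2, h3, h4⟩
        refine ⟨P, f, h1, h2, h3, ?_⟩
        rw [h4, Set.range_eq_empty, Set.range_eq_empty]
    rw [hEq, hvar, add_zero]
    exact ⟨le_refl _, le_refl _⟩
  · -- nonempty case
    haveI hXI : Nonempty X := hX
    obtain ⟨x₀⟩ := hX
    obtain ⟨M, hM⟩ : ∃ M, ∀ x, φ x ≤ M := by
      obtain ⟨c, hc⟩ := (isCompact_range hφ).bddAbove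
      exact ⟨c, fun x => hc ⟨x, rfl⟩⟩
    obtain ⟨m, hm⟩ : ∃ m, ∀ x, m ≤ φ x := by
      obtain ⟨c, hc⟩ := (isCompact_range hφ).bddBelow
      exact ⟨c, fun x => hc ⟨x, rfl⟩⟩
    set varset := {r : ℝ | ∃ x y : X, dist x y < ε ∧ r = |φ x - φ y|} with hvs
    have hvb : BddAbove varset := by
      refine ⟨M - m, ?_⟩
      rintro r ⟨x, y, -, rfl⟩
      apply abs_sub_le_iff.2
      constructor
      · linarith [hM x, hm y]
      · linarith [hM y, hm x]
    have hvar0 : (0:ℝ) ≤ sSup varset := by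
      apply le_csSup hvb
      exact ⟨x₀, x₀, by simpa using hε, by simp⟩
    set Tset := {r : ℝ | ∃ (P : FinSC) (f : X → (Fin P.k → ℝ)), Continuous f ∧
      (∀ x, f x ∈ P.space) ∧ (∀ p : Fin P.k → ℝ, sdiam dist (f ⁻¹' {p}) < ε) ∧
      r = sSup (Set.range fun x => (P.locdim (f x) : ℝ) + φ x)} with hTset
    set T'set := {r : ℝ | ∃ (P : FinSC) (f : X → (Fin P.k → ℝ)), Continuous f ∧
      (∀ x, f x ∈ P.space) ∧ (∀ p : Fin P.k → ℝ, sdiam dist (f ⁻¹' {p}) < ε) ∧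
      r = sSup (Set.range fun x => (P.locdim' (f x) : ℝ) + φ x)} with hT'set
    have eT : widimPot X dist φ ε = sInf Tset := rfl
    have eT' : widimPot' X dist φ ε = sInf T'set := rfl
    have eV : varPot (dist : X → X → ℝ) φ ε = sSup varset := rfl
    have wit_bddT : ∀ (P : FinSC) (f : X → (Fin P.k → ℝ)), (∀ x, f x ∈ P.space) →
        BddAbove (Set.range fun x => (FinSC.locdim P (f x) : ℝ) + φ x) := by
      intro P f hmem
      refine ⟨(P.k : ℝ) + M, ?_⟩
      rintro a ⟨y, rfl⟩
      have h1 : (FinSC.locdim P (f y) : ℝ) ≤ (P.k : ℝ) := by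
        exact_mod_cast FinSC.locdim_le_k (hmem y).2.2
      exact add_le_add h1 (hM y)
    have wit_bddT' : ∀ (P : FinSC) (f : X → (Fin P.k → ℝ)), (∀ x, f x ∈ P.space) →
        BddAbove (Set.range fun x => (FinSC.locdim' P (f x) : ℝ) + φ x) := by
      intro P f hmem
      refine ⟨(P.k : ℝ) + M, ?_⟩
      rintro a ⟨y, rfl⟩
      have h1 : (FinSC.locdim' P (f y) : ℝ) ≤ (P.k : ℝ) := by
        exact_mod_cast FinSC.locdim'_le_k (hmem y).2.2
      exact add_le_add h1 (hM y)
    have hlowT : BddBelow Tset := by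
      refine ⟨m, ?_⟩
      rintro r ⟨P, f, h1, h2, h3, rfl⟩
      have ha : (FinSC.locdim P (f x₀) : ℝ) + φ x₀ ≤
          sSup (Set.range fun x => (FinSC.locdim P (f x) : ℝ) + φ x) :=
        le_csSup (wit_bddT P f h2) ⟨x₀, rfl⟩
      have hb : m ≤ (FinSC.locdim P (f x₀) : ℝ) + φ x₀ := by
        have := Nat.cast_nonneg (α := ℝ) (FinSC.locdim P (f x₀))
        linarith [hm x₀]
      linarith
    have hlowT' : BddBelow T'set := by
      refine ⟨m, ?_⟩
      rintro r ⟨P, f, h1, h2, h3, rfl⟩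
      have ha : (FinSC.locdim' P (f x₀) : ℝ) + φ x₀ ≤
          sSup (Set.range fun x => (FinSC.locdim' P (f x) : ℝ) + φ x) :=
        le_csSup (wit_bddT' P f h2) ⟨x₀, rfl⟩
      have hb : m ≤ (FinSC.locdim' P (f x₀) : ℝ) + φ x₀ := by
        have := Nat.cast_nonneg (α := ℝ) (FinSC.locdim' P (f x₀))
        linarith [hm x₀]
      linarith
    constructor
    · -- first inequality
      rw [eT, eT']
      rcases Tset.eq_empty_or_nonempty with hT | hT
      · have hT' : T'set = ∅ := by
          rw [Set.eq_empty_iff_forall_notMem] at hT ⊢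
          rintro r ⟨P, f, h1, h2, h3, h4⟩
          exact hT _ ⟨P, f, h1, h2, h3, rfl⟩
        rw [hT, hT']
      · apply le_csInf hT
        rintro b ⟨P, f, h1, h2, h3, rfl⟩
        have hb' : sSup (Set.range fun x => (FinSC.locdim' P (f x) : ℝ) + φ x) ∈ T'set :=
          ⟨P, f, h1, h2, h3, rfl⟩
        refine le_trans (csInf_le hlowT' hb') ?_
        apply csSup_le (Set.range_nonempty _)
        rintro a ⟨x, rfl⟩
        dsimp only
        have h7 : (fun x => (FinSC.locdim P (f x) : ℝ) + φ x) x ≤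
            sSup (Set.range fun x => (FinSC.locdim P (f x) : ℝ) + φ x) :=
          le_csSup (wit_bddT P f h2) ⟨x, rfl⟩
        dsimp only at h7
        have h5 : FinSC.locdim' P (f x) ≤ FinSC.locdim P (f x) :=
          FinSC.locdim'_le_locdim (h2 x).2.2
        have h6 : (FinSC.locdim' P (f x) : ℝ) ≤ (FinSC.locdim P (f x) : ℝ) := by
          exact_mod_cast h5
        linarith
    · -- second inequality
      rw [eT, eT', eV]
      rcases T'set.eq_empty_or_nonempty with hT' | hT'
      · have hT : Tset = ∅ := by
          rw [Set.eq_empty_iff_forall_notMem] at hT' ⊢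
          rintro r ⟨P, f, h1, h2, h3, h4⟩
          exact hT' _ ⟨P, f, h1, h2, h3, rfl⟩
        rw [hT, hT', Real.sInf_empty]
        linarith
      · rw [← sub_le_iff_le_add]
        apply le_csInf hT'
        rintro b ⟨P, f, h1, h2, h3, rfl⟩
        rw [sub_le_iff_le_add]
        obtain ⟨r, hrmem, hrle⟩ := main_construction hε hvb hM P f h1 h2 h3
        exact le_trans (csInf_le hlowT hrmem) hrle
end
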